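/- arXiv:1703.07906 — 3 statements merged into one kernel-verified Lean document; each statement's English description precedes it below -/
import Mathlib

section
/- Let M = (M(α), M(β)) be a Kronecker representation. Then the multiplicity of the simple projective P_1 = (matrix from k^0, i.e., dimension vector (0,1)) in the indecomposable decomposition of M equals d_2 - rank[M(β) M(α)] = dim Coker[M(β) M(α)], and the multiplicity of the simple injective I_1 (dimension vector (1,0)) equals d_1 - rank([M(β); M(α)]) = dim Ker([M(β); M(α)]). -/
/-- A (finite-dimensional) representation of the Kronecker quiver
`1 ⇉ 2`: two matrices between based vector spaces `k^{ι1} → k^{ι2}`. -/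
structure KRep (k : Type) [Field k] where
  ι1 : Type
  ι2 : Type
  [f1 : Fintype ι1]
  [f2 : Fintype ι2]
  [e1 : DecidableEq ι1]
  [e2 : DecidableEq ι2]
  A : Matrix ι2 ι1 k
  B : Matrix ι2 ι1 k

attribute [instance] KRep.f1 KRep.f2 KRep.e1 KRep.e2

variable {k : Type} [Field k]

/-- Isomorphism of Kronecker representations: a pair of invertible matrices
intertwining the two structure matrices. -/
def KIso (M N : KRep k) : Prop :=
  ∃ (S : Matrix N.ι1 M.ι1 k) (T : Matrix N.ι2 M.ι2 k)
    (S' : Matrix M.ι1 N.ι1 k) (T' : Matrix M.ι2 N.ι2 k),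
    S * S' = 1 ∧ S' * S = 1 ∧ T * T' = 1 ∧ T' * T = 1 ∧
    T * M.A = N.A * S ∧ T * M.B = N.B * S

/-- Finite direct sum of Kronecker representations (block diagonal matrices). -/
def KSum {m : ℕ} (V : Fin m → KRep k) : KRep k where
  ι1 := Σ j, (V j).ι1
  ι2 := Σ j, (V j).ι2
  A := Matrix.blockDiagonal' (fun j => (V j).A)
  B := Matrix.blockDiagonal' (fun j => (V j).B)

/-- The `n × n` Jordan cell with eigenvalue `lam`. -/
def jordanCell (n : ℕ) (lam : k) : Matrix (Fin n) (Fin n) k :=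
  fun a b => if a = b then lam else if (a : ℕ) + 1 = (b : ℕ) then 1 else 0

/-- The preprojective indecomposable `P_n = ([E_{n-1}; 0], [0; E_{n-1}])`,
of dimension vector `(n-1, n)`. -/
def Prep (n : ℕ) : KRep k where
  ι1 := Fin (n - 1)
  ι2 := Fin n
  A := fun i j => if (i : ℕ) = (j : ℕ) then 1 else 0
  B := fun i j => if (i : ℕ) = (j : ℕ) + 1 then 1 else 0

/-- The preinjective indecomposable `I_n = ([E_{n-1}, 0], [0, E_{n-1}])`,
of dimension vector `(n, n-1)`. -/
def Irep (n : ℕ) : KRep k where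
  ι1 := Fin n
  ι2 := Fin (n - 1)
  A := fun i j => if (i : ℕ) = (j : ℕ) then 1 else 0
  B := fun i j => if (i : ℕ) + 1 = (j : ℕ) then 1 else 0

/-- The regular indecomposable `R_n(lam) = (E_n, J_n(lam))`. -/
def Rreg (n : ℕ) (lam : k) : KRep k where
  ι1 := Fin n
  ι2 := Fin n
  A := 1
  B := jordanCell n lam

/-- The regular indecomposable `R_n(∞) = (J_n(0), E_n)`. -/
def Rinf (n : ℕ) : KRep k where
  ι1 := Fin n
  ι2 := Fin n
  A := jordanCell n 0
  B := 1

/-- `W` belongs to the list `𝓛` of indecomposable Kronecker representations. -/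
def IsKroneckerIndec (W : KRep k) : Prop :=
  (∃ n, 1 ≤ n ∧ KIso W (Prep n)) ∨ (∃ n, 1 ≤ n ∧ KIso W (Irep n)) ∨
  (∃ n, 1 ≤ n ∧ ∃ lam : k, KIso W (Rreg n lam)) ∨ (∃ n, 1 ≤ n ∧ KIso W (Rinf n))

open Classical


section KronAux
set_option linter.unusedSectionVars false
open Matrix LinearMap Module


variable {k : Type} [Field k]

noncomputable def kdim {ι1 ι2 ι3 : Type} [Fintype ι1] [Fintype ι2] [Fintype ι3]
    (A : Matrix ι2 ι1 k) (B : Matrix ι3 ι1 k) : ℕ :=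
  Module.finrank k
    ((LinearMap.ker A.mulVecLin ⊓ LinearMap.ker B.mulVecLin : Submodule k (ι1 → k)))

variable {ι1 ι2 ι3 ι1' ι2' ι3' : Type} [Fintype ι1] [Fintype ι2] [Fintype ι3]
  [Fintype ι1'] [Fintype ι2'] [Fintype ι3']
  [DecidableEq ι1] [DecidableEq ι1']

theorem kdim_eq_zero (A : Matrix ι2 ι1 k) (B : Matrix ι3 ι1 k)
    (h : ∀ x, A *ᵥ x = 0 → B *ᵥ x = 0 → x = 0) : kdim A B = 0 := by
  have hbot : (LinearMap.ker A.mulVecLin ⊓ LinearMap.ker B.mulVecLin : Submodule k (ι1 → k)) = ⊥ := by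
    rw [eq_bot_iff]
    rintro x hx
    rw [Submodule.mem_inf, LinearMap.mem_ker, LinearMap.mem_ker,
      Matrix.mulVecLin_apply, Matrix.mulVecLin_apply] at hx
    exact h x hx.1 hx.2
  rw [kdim, hbot, finrank_bot]

theorem kdim_of_isEmpty_cod [IsEmpty ι2] [IsEmpty ι3] (A : Matrix ι2 ι1 k) (B : Matrix ι3 ι1 k) :
    kdim A B = Fintype.card ι1 := by
  have h : ∀ {ι : Type} [Fintype ι] [IsEmpty ι] (C : Matrix ι ι1 k),
      LinearMap.ker C.mulVecLin = ⊤ := by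
    intro ι _ _ C
    rw [eq_top_iff]
    intro x _
    rw [LinearMap.mem_ker, Matrix.mulVecLin_apply]
    exact funext fun i => (IsEmpty.false i).elim
  rw [kdim, h, h, inf_idem, finrank_top, Module.finrank_fintype_fun_eq_card]

theorem kdim_of_isEmpty_dom [IsEmpty ι1] (A : Matrix ι2 ι1 k) (B : Matrix ι3 ι1 k) :
    kdim A B = 0 := by
  have h := Submodule.finrank_le
    ((LinearMap.ker A.mulVecLin ⊓ LinearMap.ker B.mulVecLin : Submodule k (ι1 → k)))
  rw [Module.finrank_fintype_fun_eq_card, Fintype.card_eq_zero] at h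
  rw [kdim]
  omega

theorem kdim_conj (A : Matrix ι2 ι1 k) (B : Matrix ι3 ι1 k) (A' : Matrix ι2' ι1' k) (B' : Matrix ι3' ι1' k)
    (S : Matrix ι1 ι1' k) (S' : Matrix ι1' ι1 k)
    (h1 : S * S' = 1) (h2 : S' * S = 1)
    (hA : ∀ x, A' *ᵥ x = 0 → A *ᵥ S *ᵥ x = 0)
    (hB : ∀ x, B' *ᵥ x = 0 → B *ᵥ S *ᵥ x = 0)
    (hA' : ∀ x, A *ᵥ x = 0 → A' *ᵥ S' *ᵥ x = 0)
    (hB' : ∀ x, B *ᵥ x = 0 → B' *ᵥ S' *ᵥ x = 0) :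
    kdim A B = kdim A' B' := by
  let e : (ι1' → k) ≃ₗ[k] (ι1 → k) :=
    LinearEquiv.ofLinear S.mulVecLin S'.mulVecLin
      (by rw [← Matrix.mulVecLin_mul, h1, Matrix.mulVecLin_one])
      (by rw [← Matrix.mulVecLin_mul, h2, Matrix.mulVecLin_one])
  have hmap : (LinearMap.ker A'.mulVecLin ⊓ LinearMap.ker B'.mulVecLin).map
      (e : (ι1' → k) →ₗ[k] (ι1 → k))
      = (LinearMap.ker A.mulVecLin ⊓ LinearMap.ker B.mulVecLin) := by
    apply le_antisymm
    · rintro y ⟨x, hx, rfl⟩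
      rw [SetLike.mem_coe, Submodule.mem_inf, LinearMap.mem_ker, LinearMap.mem_ker,
        Matrix.mulVecLin_apply, Matrix.mulVecLin_apply] at hx
      exact Submodule.mem_inf.2 ⟨hA x hx.1, hB x hx.2⟩
    · intro x hx
      rw [Submodule.mem_inf, LinearMap.mem_ker, LinearMap.mem_ker,
        Matrix.mulVecLin_apply, Matrix.mulVecLin_apply] at hx
      refine ⟨S' *ᵥ x, ?_, ?_⟩
      · exact Submodule.mem_inf.2 ⟨hA' x hx.1, hB' x hx.2⟩
      · show S *ᵥ (S' *ᵥ x) = x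
        rw [Matrix.mulVec_mulVec, h1, Matrix.one_mulVec]
  rw [kdim, kdim, ← hmap, LinearEquiv.finrank_map_eq]

variable {k : Type} [Field k]

theorem blockDiagonal'_mulVec_apply {m : ℕ} {ι1 ι2 : Fin m → Type}
    [∀ j, Fintype (ι1 j)] [∀ j, Fintype (ι2 j)]
    (M : ∀ j, Matrix (ι2 j) (ι1 j) k) (x : (Σ j, ι1 j) → k) (j : Fin m) (i : ι2 j) :
    (Matrix.blockDiagonal' M *ᵥ x) ⟨j, i⟩ = (M j *ᵥ fun i' => x ⟨j, i'⟩) i := by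
  show ∑ p : (Σ j', ι1 j'), Matrix.blockDiagonal' M ⟨j, i⟩ p * x p
      = ∑ i' : ι1 j, M j i i' * x ⟨j, i'⟩
  rw [← Finset.univ_sigma_univ, Finset.sum_sigma]
  rw [Finset.sum_eq_single j]
  · simp
  · intro j' _ hj'
    apply Finset.sum_eq_zero
    intro i' _
    rw [Matrix.blockDiagonal'_apply_ne _ _ _ (Ne.symm hj'), zero_mul]
  · intro h; exact absurd (Finset.mem_univ j) h

theorem kdim_blockDiagonal' {m : ℕ} {ι1 ι2 ι3 : Fin m → Type}
    [∀ j, Fintype (ι1 j)] [∀ j, Fintype (ι2 j)] [∀ j, Fintype (ι3 j)]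
    (M : ∀ j, Matrix (ι2 j) (ι1 j) k) (N : ∀ j, Matrix (ι3 j) (ι1 j) k) :
    kdim (Matrix.blockDiagonal' M) (Matrix.blockDiagonal' N) = ∑ j, kdim (M j) (N j) := by
  classical
  set P : Submodule k ((Σ j, ι1 j) → k) :=
    LinearMap.ker (Matrix.blockDiagonal' M).mulVecLin ⊓
      LinearMap.ker (Matrix.blockDiagonal' N).mulVecLin with hP
  set Q : ∀ j, Submodule k (ι1 j → k) :=
    fun j => LinearMap.ker (M j).mulVecLin ⊓ LinearMap.ker (N j).mulVecLin with hQ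
  have memP : ∀ x : (Σ j, ι1 j) → k, x ∈ P ↔ ∀ j, (fun i => x ⟨j, i⟩) ∈ Q j := by
    intro x
    rw [hP, Submodule.mem_inf, LinearMap.mem_ker, LinearMap.mem_ker,
      Matrix.mulVecLin_apply, Matrix.mulVecLin_apply]
    simp only [hQ, Submodule.mem_inf, LinearMap.mem_ker, Matrix.mulVecLin_apply]
    constructor
    · rintro ⟨h1, h2⟩ j
      constructor <;> [skip; skip] <;>
        · funext i
          first
          | (have := congrFun h1 ⟨j, i⟩
             rw [blockDiagonal'_mulVec_apply] at this
             exact this)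
          | (have := congrFun h2 ⟨j, i⟩
             rw [blockDiagonal'_mulVec_apply] at this
             exact this)
    · intro h
      constructor <;>
        · funext p
          obtain ⟨j, i⟩ := p
          rw [blockDiagonal'_mulVec_apply]
          first
        | exact congrFun (h j).1 i
        | exact congrFun (h j).2 i
  let e : P ≃ₗ[k] (∀ j, Q j) :=
    { toFun := fun x j => ⟨fun i => x.1 ⟨j, i⟩, (memP x.1).1 x.2 j⟩
      map_add' := fun x y => rfl
      map_smul' := fun c x => rfl
      invFun := fun y => ⟨fun p => (y p.1).1 p.2, (memP _).2 (fun j => (y j).2)⟩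
      left_inv := fun x => Subtype.ext (funext fun p => by cases p; rfl)
      right_inv := fun y => funext fun j => Subtype.ext rfl }
  have h1 : kdim (Matrix.blockDiagonal' M) (Matrix.blockDiagonal' N) = Module.finrank k P := rfl
  rw [h1, e.finrank_eq, Module.finrank_pi_fintype]
  rfl
variable {k : Type} [Field k]
variable {ι1 ι2 ι3 ι1' ι2' ι3' : Type} [Fintype ι1] [Fintype ι2] [Fintype ι3] [Fintype ι1'] [Fintype ι2'] [Fintype ι3']

theorem ker_fromRows (X : Matrix ι2 ι1 k) (Y : Matrix ι2' ι1 k) :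
    LinearMap.ker (Matrix.fromRows X Y).mulVecLin
      = LinearMap.ker X.mulVecLin ⊓ LinearMap.ker Y.mulVecLin := by
  ext v
  rw [Submodule.mem_inf, LinearMap.mem_ker, LinearMap.mem_ker, LinearMap.mem_ker,
    Matrix.mulVecLin_apply, Matrix.mulVecLin_apply, Matrix.mulVecLin_apply,
    Matrix.fromRows_mulVec]
  constructor
  · intro h
    constructor
    · funext i; exact congrFun h (Sum.inl i)
    · funext i; exact congrFun h (Sum.inr i)
  · rintro ⟨h1, h2⟩
    funext i
    cases i with
    | inl i => exact congrFun h1 i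
    | inr i => exact congrFun h2 i

theorem rank_fromRows_add_kdim (X : Matrix ι2 ι1 k) (Y : Matrix ι2' ι1 k) :
    (Matrix.fromRows X Y).rank + kdim X Y = Fintype.card ι1 := by
  have h := LinearMap.finrank_range_add_finrank_ker (Matrix.fromRows X Y).mulVecLin
  rw [Module.finrank_fintype_fun_eq_card, ker_fromRows] at h
  exact h

theorem rank_fromColumns_add_kdim (X : Matrix ι2 ι1 k) (Y : Matrix ι2 ι1' k) :
    (Matrix.fromCols X Y).rank + kdim Xᵀ Yᵀ = Fintype.card ι2 := by
  rw [← Matrix.rank_transpose (Matrix.fromCols X Y), Matrix.transpose_fromCols]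
  exact rank_fromRows_add_kdim Xᵀ Yᵀ

theorem finrank_ker_eq_kdim (X : Matrix ι2 ι1 k) (Y : Matrix ι2' ι1 k) :
    Module.finrank k (LinearMap.ker (Matrix.fromRows X Y).mulVecLin) = kdim X Y := by
  rw [ker_fromRows]; rfl

theorem finrank_quot_add_rank (X : Matrix ι2 ι1 k) :
    Module.finrank k ((ι2 → k) ⧸ LinearMap.range X.mulVecLin) + X.rank = Fintype.card ι2 := by
  have h := Submodule.finrank_quotient_add_finrank (LinearMap.range X.mulVecLin)
  rw [Module.finrank_fintype_fun_eq_card] at h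
  exact h

theorem sum_ite_eq_val {n : ℕ} (c : ℕ) (hc : c < n) (y : Fin n → k) :
    (∑ i : Fin n, (if (i : ℕ) = c then (1:k) else 0) * y i) = y ⟨c, hc⟩ := by
  rw [Finset.sum_eq_single (⟨c, hc⟩ : Fin n)]
  · simp
  · intro b _ hb
    rw [if_neg, zero_mul]
    intro h; exact hb (Fin.ext h)
  · intro h; exact absurd (Finset.mem_univ _) h

theorem sum_ite_eq_val' {n : ℕ} (c : ℕ) (hc : c < n) (y : Fin n → k) :
    (∑ i : Fin n, (if c = (i : ℕ) then (1:k) else 0) * y i) = y ⟨c, hc⟩ := by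
  rw [← sum_ite_eq_val c hc y]
  apply Finset.sum_congr rfl
  intro i _
  congr 1
  by_cases h : c = (i : ℕ) <;> simp [h, eq_comm]

section KronGlue
variable {k : Type} [Field k]

theorem mulVec_cancel {ι2 ι2' : Type} [Fintype ι2] [Fintype ι2'] [DecidableEq ι2]
    (T : Matrix ι2' ι2 k) (T' : Matrix ι2 ι2' k) (hT'T : T' * T = 1)
    {y : ι2 → k} (hy : T *ᵥ y = 0) : y = 0 := by
  have := congrArg (fun z => T' *ᵥ z) hy
  simpa [Matrix.mulVec_mulVec, hT'T, Matrix.one_mulVec, Matrix.mulVec_zero] using this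

theorem kdim_eq_of_kiso {M N : KRep k} (h : KIso M N) :
    kdim M.B M.A = kdim N.B N.A := by
  obtain ⟨S, T, S', T', hSS', hS'S, hTT', hT'T, hA, hB⟩ := h
  apply kdim_conj M.B M.A N.B N.A S' S hS'S hSS'
  · intro x hx
    apply mulVec_cancel T T' hT'T
    simp only [Matrix.mulVec_mulVec]
    rw [← Matrix.mul_assoc, hB, Matrix.mul_assoc, hSS', Matrix.mul_one]
    exact hx
  · intro x hx
    apply mulVec_cancel T T' hT'T
    simp only [Matrix.mulVec_mulVec]
    rw [← Matrix.mul_assoc, hA, Matrix.mul_assoc, hSS', Matrix.mul_one]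
    exact hx
  · intro x hx
    apply mulVec_cancel T' T hTT'
    simp only [Matrix.mulVec_mulVec]
    rw [← hB, ← Matrix.mul_assoc, hT'T, Matrix.one_mul]
    exact hx
  · intro x hx
    apply mulVec_cancel T' T hTT'
    simp only [Matrix.mulVec_mulVec]
    rw [← hA, ← Matrix.mul_assoc, hT'T, Matrix.one_mul]
    exact hx

theorem kdim_transpose_eq_of_kiso {M N : KRep k} (h : KIso M N) :
    kdim M.Bᵀ M.Aᵀ = kdim N.Bᵀ N.Aᵀ := by
  obtain ⟨S, T, S', T', hSS', hS'S, hTT', hT'T, hA, hB⟩ := h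
  have eA : T' * N.A = M.A * S' := by
    calc T' * N.A = T' * (N.A * (S * S')) := by rw [hSS', Matrix.mul_one]
      _ = T' * (N.A * S * S') := by rw [Matrix.mul_assoc N.A S S']
      _ = M.A * S' := by
          rw [← hA, ← Matrix.mul_assoc, ← Matrix.mul_assoc, hT'T, Matrix.one_mul]
  have eB : T' * N.B = M.B * S' := by
    calc T' * N.B = T' * (N.B * (S * S')) := by rw [hSS', Matrix.mul_one]
      _ = T' * (N.B * S * S') := by rw [Matrix.mul_assoc N.B S S']
      _ = M.B * S' := by
          rw [← hB, ← Matrix.mul_assoc, ← Matrix.mul_assoc, hT'T, Matrix.one_mul]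
  apply kdim_conj M.Bᵀ M.Aᵀ N.Bᵀ N.Aᵀ Tᵀ T'ᵀ
  · rw [← Matrix.transpose_mul, hT'T, Matrix.transpose_one]
  · rw [← Matrix.transpose_mul, hTT', Matrix.transpose_one]
  · intro x hx
    simp only [Matrix.mulVec_mulVec]
    rw [← Matrix.transpose_mul, hB, Matrix.transpose_mul, ← Matrix.mulVec_mulVec, hx,
      Matrix.mulVec_zero]
  · intro x hx
    simp only [Matrix.mulVec_mulVec]
    rw [← Matrix.transpose_mul, hA, Matrix.transpose_mul, ← Matrix.mulVec_mulVec, hx,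
      Matrix.mulVec_zero]
  · intro x hx
    simp only [Matrix.mulVec_mulVec]
    rw [← Matrix.transpose_mul, eB, Matrix.transpose_mul, ← Matrix.mulVec_mulVec, hx,
      Matrix.mulVec_zero]
  · intro x hx
    simp only [Matrix.mulVec_mulVec]
    rw [← Matrix.transpose_mul, eA, Matrix.transpose_mul, ← Matrix.mulVec_mulVec, hx,
      Matrix.mulVec_zero]

end KronGlue

section KronVals
variable {k : Type} [Field k]

theorem prep_A_mulVec {n : ℕ} (x : Fin (n-1) → k) (i : Fin n) :
    ((Prep (k := k) n).A *ᵥ x) i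
      = ∑ j : Fin (n-1), (if (i : ℕ) = (j : ℕ) then (1:k) else 0) * x j := rfl

theorem prep_B_mulVec {n : ℕ} (x : Fin (n-1) → k) (i : Fin n) :
    ((Prep (k := k) n).B *ᵥ x) i
      = ∑ j : Fin (n-1), (if (i : ℕ) = (j : ℕ) + 1 then (1:k) else 0) * x j := rfl

theorem prep_At_mulVec {n : ℕ} (y : Fin n → k) (j : Fin (n-1)) :
    ((Prep (k := k) n).Aᵀ *ᵥ y) j
      = ∑ i : Fin n, (if (i : ℕ) = (j : ℕ) then (1:k) else 0) * y i := rfl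

theorem prep_Bt_mulVec {n : ℕ} (y : Fin n → k) (j : Fin (n-1)) :
    ((Prep (k := k) n).Bᵀ *ᵥ y) j
      = ∑ i : Fin n, (if (i : ℕ) = (j : ℕ) + 1 then (1:k) else 0) * y i := rfl

theorem irep_A_mulVec {n : ℕ} (x : Fin n → k) (i : Fin (n-1)) :
    ((Irep (k := k) n).A *ᵥ x) i
      = ∑ j : Fin n, (if (i : ℕ) = (j : ℕ) then (1:k) else 0) * x j := rfl

theorem irep_B_mulVec {n : ℕ} (x : Fin n → k) (i : Fin (n-1)) :
    ((Irep (k := k) n).B *ᵥ x) i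
      = ∑ j : Fin n, (if (i : ℕ) + 1 = (j : ℕ) then (1:k) else 0) * x j := rfl

theorem irep_At_mulVec {n : ℕ} (y : Fin (n-1) → k) (j : Fin n) :
    ((Irep (k := k) n).Aᵀ *ᵥ y) j
      = ∑ i : Fin (n-1), (if (i : ℕ) = (j : ℕ) then (1:k) else 0) * y i := rfl

theorem prep_kerval (n : ℕ) : kdim (Prep (k := k) n).B (Prep n).A = 0 := by
  apply kdim_eq_zero
  intro x _ hA
  funext j
  have h := congrFun hA ⟨j.1, lt_of_lt_of_le j.2 (Nat.sub_le n 1)⟩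
  erw [prep_A_mulVec] at h
  simp only [Pi.zero_apply] at h ⊢
  rw [sum_ite_eq_val' j.1 j.2 x] at h
  exact h

theorem prep_corkval1 : kdim (Prep (k := k) 1).Bᵀ (Prep 1).Aᵀ = 1 := by
  haveI : IsEmpty ((Prep (k := k) 1).ι1) := inferInstanceAs (IsEmpty (Fin 0))
  rw [kdim_of_isEmpty_cod]
  exact rfl

theorem prep_corkval (n : ℕ) (hn : 2 ≤ n) :
    kdim (Prep (k := k) n).Bᵀ (Prep n).Aᵀ = 0 := by
  apply kdim_eq_zero
  intro y hB hA
  have h1 : ∀ j : Fin (n-1), y ⟨j.1, lt_of_lt_of_le j.2 (Nat.sub_le n 1)⟩ = 0 := by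
    intro j
    have h := congrFun hA j
    erw [prep_At_mulVec] at h
    rw [sum_ite_eq_val j.1 (lt_of_lt_of_le j.2 (Nat.sub_le n 1)) y] at h
    exact h
  have h2 : ∀ j : Fin (n-1), y ⟨j.1 + 1, by omega⟩ = 0 := by
    intro j
    have h := congrFun hB j
    erw [prep_Bt_mulVec] at h
    have hj : j.1 + 1 < n := by have := j.2; omega
    rw [sum_ite_eq_val (j.1 + 1) hj y] at h
    exact h
  funext i
  simp only [Pi.zero_apply]
  by_cases hi : i.1 < n - 1
  · have := h1 ⟨i.1, hi⟩
    exact this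
  · have hi' : i.1 = (n - 2) + 1 := by have := i.2; omega
    have := h2 ⟨n - 2, by omega⟩
    simp only at this
    rw [show i = (⟨(n-2)+1, by omega⟩ : Fin n) from Fin.ext hi']
    exact this

theorem irep_kerval1 : kdim (Irep (k := k) 1).B (Irep 1).A = 1 := by
  haveI : IsEmpty ((Irep (k := k) 1).ι2) := inferInstanceAs (IsEmpty (Fin 0))
  rw [kdim_of_isEmpty_cod]
  exact rfl

theorem irep_kerval (n : ℕ) (hn : 2 ≤ n) :
    kdim (Irep (k := k) n).B (Irep n).A = 0 := by
  apply kdim_eq_zero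
  intro x hB hA
  have h1 : ∀ i : Fin (n-1), x ⟨i.1, lt_of_lt_of_le i.2 (Nat.sub_le n 1)⟩ = 0 := by
    intro i
    have h := congrFun hA i
    erw [irep_A_mulVec] at h
    rw [sum_ite_eq_val' i.1 (lt_of_lt_of_le i.2 (Nat.sub_le n 1)) x] at h
    exact h
  have h2 : ∀ i : Fin (n-1), x ⟨i.1 + 1, by omega⟩ = 0 := by
    intro i
    have h := congrFun hB i
    erw [irep_B_mulVec] at h
    have hi : i.1 + 1 < n := by have := i.2; omega
    rw [sum_ite_eq_val' (i.1 + 1) hi x] at h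
    exact h
  funext i
  simp only [Pi.zero_apply]
  by_cases hi : i.1 < n - 1
  · have := h1 ⟨i.1, hi⟩
    exact this
  · have hi' : i.1 = (n - 2) + 1 := by have := i.2; omega
    have := h2 ⟨n - 2, by omega⟩
    simp only at this
    rw [show i = (⟨(n-2)+1, by omega⟩ : Fin n) from Fin.ext hi']
    exact this

theorem irep_corkval (n : ℕ) : kdim (Irep (k := k) n).Bᵀ (Irep n).Aᵀ = 0 := by
  apply kdim_eq_zero
  intro y _ hA
  funext i
  have h := congrFun hA ⟨i.1, lt_of_lt_of_le i.2 (Nat.sub_le n 1)⟩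
  erw [irep_At_mulVec] at h
  simp only [Pi.zero_apply] at h ⊢
  rw [sum_ite_eq_val i.1 i.2 y] at h
  exact h

theorem rreg_kerval (n : ℕ) (lam : k) : kdim (Rreg (k := k) n lam).B (Rreg n lam).A = 0 := by
  apply kdim_eq_zero
  intro x _ hA
  have hA' : (1 : Matrix (Fin n) (Fin n) k) *ᵥ x = 0 := hA
  exact (Matrix.one_mulVec (x : Fin n → k)).symm.trans hA'

theorem rreg_corkval (n : ℕ) (lam : k) :
    kdim (Rreg (k := k) n lam).Bᵀ (Rreg n lam).Aᵀ = 0 := by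
  apply kdim_eq_zero
  intro y _ hA
  have hA' : (1 : Matrix (Fin n) (Fin n) k)ᵀ *ᵥ y = 0 := hA
  rw [Matrix.transpose_one] at hA'
  exact (Matrix.one_mulVec (y : Fin n → k)).symm.trans hA'

theorem rinf_kerval (n : ℕ) : kdim (Rinf (k := k) n).B (Rinf n).A = 0 := by
  apply kdim_eq_zero
  intro x hB _
  have hB' : (1 : Matrix (Fin n) (Fin n) k) *ᵥ x = 0 := hB
  exact (Matrix.one_mulVec (x : Fin n → k)).symm.trans hB'

theorem rinf_corkval (n : ℕ) : kdim (Rinf (k := k) n).Bᵀ (Rinf n).Aᵀ = 0 := by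
  apply kdim_eq_zero
  intro y hB _
  have hB' : (1 : Matrix (Fin n) (Fin n) k)ᵀ *ᵥ y = 0 := hB
  rw [Matrix.transpose_one] at hB'
  exact (Matrix.one_mulVec (y : Fin n → k)).symm.trans hB'

end KronVals

end KronAux

section Main
set_option linter.unusedSectionVars false
open Matrix LinearMap Module

/-- if the Kronecker representation `M` decomposes as `⊕_j V j` with each
`V j` an indecomposable Kronecker representation, then the multiplicity of the simple
projective `P_1` equals `d_2 - rank [M(β) M(α)] = dim Coker [M(β) M(α)]` and the
multiplicity of the simple injective `I_1` equals
`d_1 - rank [M(β); M(α)] = dim Ker [M(β); M(α)]`. -/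
theorem kronecker_simple_multiplicities [IsAlgClosed k] (M : KRep k)
    (m : ℕ) (V : Fin m → KRep k) (hV : ∀ j, IsKroneckerIndec (V j))
    (hiso : KIso M (KSum V)) :
    ((Finset.univ.filter (fun j => KIso (V j) (Prep (k := k) 1))).card
        = Fintype.card M.ι2 - (Matrix.fromCols M.B M.A).rank ∧
      (Finset.univ.filter (fun j => KIso (V j) (Prep (k := k) 1))).card
        = Module.finrank k
            ((M.ι2 → k) ⧸ LinearMap.range (Matrix.fromCols M.B M.A).mulVecLin)) ∧
    ((Finset.univ.filter (fun j => KIso (V j) (Irep (k := k) 1))).card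
        = Fintype.card M.ι1 - (Matrix.fromRows M.B M.A).rank ∧
      (Finset.univ.filter (fun j => KIso (V j) (Irep (k := k) 1))).card
        = Module.finrank k (LinearMap.ker (Matrix.fromRows M.B M.A).mulVecLin)) := by
  have hker : kdim M.B M.A = ∑ j, kdim (V j).B (V j).A := by
    rw [kdim_eq_of_kiso hiso]
    exact kdim_blockDiagonal' (fun j => (V j).B) (fun j => (V j).A)
  have hcork : kdim M.Bᵀ M.Aᵀ = ∑ j, kdim (V j).Bᵀ (V j).Aᵀ := by
    rw [kdim_transpose_eq_of_kiso hiso]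
    show kdim (Matrix.blockDiagonal' fun j => (V j).B)ᵀ
      (Matrix.blockDiagonal' fun j => (V j).A)ᵀ = _
    rw [Matrix.blockDiagonal'_transpose, Matrix.blockDiagonal'_transpose]
    exact kdim_blockDiagonal' _ _
  have hval1 : ∀ j, kdim (V j).Bᵀ (V j).Aᵀ
      = if KIso (V j) (Prep (k := k) 1) then 1 else 0 := by
    intro j
    by_cases hij : KIso (V j) (Prep (k := k) 1)
    · rw [if_pos hij, kdim_transpose_eq_of_kiso hij, prep_corkval1]
    · rw [if_neg hij]
      rcases hV j with ⟨n, hn, hiso'⟩ | ⟨n, hn, hiso'⟩ | ⟨n, hn, lam, hiso'⟩ | ⟨n, hn, hiso'⟩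
      · rcases eq_or_lt_of_le hn with rfl | h1
        · exact absurd hiso' hij
        · rw [kdim_transpose_eq_of_kiso hiso', prep_corkval n h1]
      · rw [kdim_transpose_eq_of_kiso hiso', irep_corkval n]
      · rw [kdim_transpose_eq_of_kiso hiso', rreg_corkval n lam]
      · rw [kdim_transpose_eq_of_kiso hiso', rinf_corkval n]
  have hval2 : ∀ j, kdim (V j).B (V j).A
      = if KIso (V j) (Irep (k := k) 1) then 1 else 0 := by
    intro j
    by_cases hij : KIso (V j) (Irep (k := k) 1)
    · rw [if_pos hij, kdim_eq_of_kiso hij, irep_kerval1]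
    · rw [if_neg hij]
      rcases hV j with ⟨n, hn, hiso'⟩ | ⟨n, hn, hiso'⟩ | ⟨n, hn, lam, hiso'⟩ | ⟨n, hn, hiso'⟩
      · rw [kdim_eq_of_kiso hiso', prep_kerval n]
      · rcases eq_or_lt_of_le hn with rfl | h1
        · exact absurd hiso' hij
        · rw [kdim_eq_of_kiso hiso', irep_kerval n h1]
      · rw [kdim_eq_of_kiso hiso', rreg_kerval n lam]
      · rw [kdim_eq_of_kiso hiso', rinf_kerval n]
  have hcount1 : (Finset.univ.filter (fun j => KIso (V j) (Prep (k := k) 1))).card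
      = kdim M.Bᵀ M.Aᵀ := by
    rw [Finset.card_filter, hcork]
    exact Finset.sum_congr rfl fun j _ => ((hval1 j).symm)
  have hcount2 : (Finset.univ.filter (fun j => KIso (V j) (Irep (k := k) 1))).card
      = kdim M.B M.A := by
    rw [Finset.card_filter, hker]
    exact Finset.sum_congr rfl fun j _ => ((hval2 j).symm)
  have hrk2 := rank_fromColumns_add_kdim M.B M.A
  have hq := finrank_quot_add_rank (Matrix.fromCols M.B M.A)
  have hrk1 := rank_fromRows_add_kdim M.B M.A
  have hk := finrank_ker_eq_kdim M.B M.A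
  refine ⟨⟨?_, ?_⟩, ?_, ?_⟩
  · omega
  · omega
  · omega
  · omega

end Main
end

section
/- Let M be a Kronecker representation with dimension vector (d_1, d_2), and let p_n(M) := rank P_n(M) for n ≥ 2, p_1(M) := 0, where P_n(M) is the block matrix with n-1 block rows and n block columns with M(β) on the block diagonal and M(α) on the block superdiagonal. Then for n ≥ 2, the multiplicity of the preprojective indecomposable P_n in the decomposition of M equals 2p_n(M) - p_{n-1}(M) - p_{n+1}(M). -/
variable {k : Type} [Field k]

/-- The block matrix `P_n(M)` with `n - 1` block rows and `n` block columns, with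
`M(β)` on the block diagonal and `M(α)` on the block superdiagonal
(`P_1(M)` is empty, so `p_1(M) = rank P_1(M) = 0`). -/
def prepBlockMat (M : KRep k) (n : ℕ) : Matrix (Fin (n - 1) × M.ι2) (Fin n × M.ι1) k :=
  fun rp cq =>
    if (cq.1 : ℕ) = (rp.1 : ℕ) then M.B rp.2 cq.2
    else if (cq.1 : ℕ) = (rp.1 : ℕ) + 1 then M.A rp.2 cq.2 else 0

open Classical

namespace KronAux

variable {k : Type} [Field k]

/-- first block index -/
def fIdx {m : ℕ} (i : Fin (m - 1)) : Fin m := ⟨i, i.2.trans_le (Nat.sub_le m 1)⟩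
/-- second block index -/
def sIdx {m : ℕ} (i : Fin (m - 1)) : Fin m := ⟨(i : ℕ) + 1, by
  have := i.2; omega⟩

lemma prepBlockMat_mulVec (M : KRep k) (m : ℕ) (x : Fin m × M.ι1 → k)
    (i : Fin (m - 1)) (r : M.ι2) :
    (prepBlockMat M m).mulVec x (i, r) =
      M.B.mulVec (fun c => x (fIdx i, c)) r + M.A.mulVec (fun c => x (sIdx i, c)) r := by
  have hne : (fIdx i : Fin m) ≠ sIdx i := by
    simp [fIdx, sIdx, Fin.ext_iff]
  have key : ∀ j : Fin m, (∑ c, prepBlockMat M m (i, r) (j, c) * x (j, c))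
      = (if j = fIdx i then ∑ c, M.B r c * x (j, c) else 0)
        + (if j = sIdx i then ∑ c, M.A r c * x (j, c) else 0) := by
    intro j
    rcases eq_or_ne j (fIdx i) with h0 | h0
    · subst h0
      rw [if_pos rfl, if_neg hne]
      simp [prepBlockMat, fIdx]
    · rcases eq_or_ne j (sIdx i) with h1 | h1
      · subst h1
        rw [if_neg h0, if_pos rfl]
        have : ((sIdx i : Fin m) : ℕ) ≠ (i : ℕ) := by simp [sIdx]
        simp [prepBlockMat, sIdx, this]
      · have e0 : ((j : Fin m) : ℕ) ≠ (i : ℕ) := by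
          intro h; exact h0 (Fin.ext (by simpa [fIdx] using h))
        have e1 : ((j : Fin m) : ℕ) ≠ (i : ℕ) + 1 := by
          intro h; exact h1 (Fin.ext (by simpa [sIdx] using h))
        rw [if_neg h0, if_neg h1]
        simp [prepBlockMat, e0, e1]
  calc (prepBlockMat M m).mulVec x (i, r)
      = ∑ j : Fin m, ∑ c, prepBlockMat M m (i, r) (j, c) * x (j, c) := by
        rw [Matrix.mulVec, dotProduct, Fintype.sum_prod_type]
    _ = _ := by
        simp_rw [key]
        rw [Finset.sum_add_distrib, Finset.sum_ite_eq' Finset.univ,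
          Finset.sum_ite_eq' Finset.univ]
        simp [Matrix.mulVec, dotProduct]

lemma mem_ker_iff (M : KRep k) (m : ℕ) (x : Fin m × M.ι1 → k) :
    x ∈ LinearMap.ker (prepBlockMat M m).mulVecLin ↔
      ∀ (i : Fin (m - 1)) (r : M.ι2),
        M.B.mulVec (fun c => x (fIdx i, c)) r + M.A.mulVec (fun c => x (sIdx i, c)) r = 0 := by
  rw [LinearMap.mem_ker]
  constructor
  · intro h i r
    rw [← prepBlockMat_mulVec]
    exact congrFun h (i, r)
  · intro h
    funext p
    obtain ⟨i, r⟩ := p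
    rw [Matrix.mulVecLin_apply, prepBlockMat_mulVec]
    exact h i r

lemma rank_add_nullity {ι1 ι2 : Type} [Fintype ι1] [Fintype ι2] [DecidableEq ι2]
    (A : Matrix ι1 ι2 k) :
    A.rank + Module.finrank k (LinearMap.ker A.mulVecLin) = Fintype.card ι2 := by
  have := LinearMap.finrank_range_add_finrank_ker A.mulVecLin
  rwa [Module.finrank_pi] at this

lemma rank_add_nullity' (M : KRep k) (m : ℕ) :
    (prepBlockMat M m).rank
      + Module.finrank k (LinearMap.ker (prepBlockMat M m).mulVecLin)
      = m * Fintype.card M.ι1 := by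
  rw [rank_add_nullity]
  simp [Fintype.card_prod]


lemma kiso_symm {M N : KRep k} (h : KIso M N) : KIso N M := by
  obtain ⟨S, T, S', T', hSS', hS'S, hTT', hT'T, hA, hB⟩ := h
  refine ⟨S', T', S, T, hS'S, hSS', hT'T, hTT', ?_, ?_⟩
  · calc T' * N.A = T' * N.A * (S * S') := by rw [hSS', Matrix.mul_one]
      _ = T' * (N.A * S) * S' := by rw [← Matrix.mul_assoc, Matrix.mul_assoc T' N.A S]
      _ = T' * (T * M.A) * S' := by rw [hA]
      _ = (T' * T) * (M.A * S') := by rw [Matrix.mul_assoc, Matrix.mul_assoc, Matrix.mul_assoc]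
      _ = M.A * S' := by rw [hT'T, Matrix.one_mul]
  · calc T' * N.B = T' * N.B * (S * S') := by rw [hSS', Matrix.mul_one]
      _ = T' * (N.B * S) * S' := by rw [← Matrix.mul_assoc, Matrix.mul_assoc T' N.B S]
      _ = T' * (T * M.B) * S' := by rw [hB]
      _ = (T' * T) * (M.B * S') := by rw [Matrix.mul_assoc, Matrix.mul_assoc, Matrix.mul_assoc]
      _ = M.B * S' := by rw [hT'T, Matrix.one_mul]

lemma kiso_trans {M N P : KRep k} (h1 : KIso M N) (h2 : KIso N P) : KIso M P := by
  obtain ⟨S1, T1, S1', T1', hSS1, hS'S1, hTT1, hT'T1, hA1, hB1⟩ := h1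
  obtain ⟨S2, T2, S2', T2', hSS2, hS'S2, hTT2, hT'T2, hA2, hB2⟩ := h2
  have comp : ∀ {a b c : Type} [Fintype a] [Fintype b] [Fintype c]
      [DecidableEq a] [DecidableEq b] [DecidableEq c]
      (X : Matrix c b k) (Y : Matrix b a k) (Y' : Matrix a b k) (X' : Matrix b c k),
      Y * Y' = 1 → X * X' = 1 → (X * Y) * (Y' * X') = 1 := by
    intro a b c _ _ _ _ _ _ X Y Y' X' h1 h2
    rw [Matrix.mul_assoc, ← Matrix.mul_assoc Y, h1, Matrix.one_mul, h2]
  refine ⟨S2 * S1, T2 * T1, S1' * S2', T1' * T2',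
    comp _ _ _ _ hSS1 hSS2, comp _ _ _ _ hS'S2 hS'S1,
    comp _ _ _ _ hTT1 hTT2, comp _ _ _ _ hT'T2 hT'T1, ?_, ?_⟩
  · rw [Matrix.mul_assoc, hA1, ← Matrix.mul_assoc, hA2, Matrix.mul_assoc]
  · rw [Matrix.mul_assoc, hB1, ← Matrix.mul_assoc, hB2, Matrix.mul_assoc]

lemma card_eq_of_inv {ι1 ι2 : Type} [Fintype ι1] [Fintype ι2] [DecidableEq ι1] [DecidableEq ι2]
    (S : Matrix ι2 ι1 k) (S' : Matrix ι1 ι2 k) (h1 : S * S' = 1) (h2 : S' * S = 1) :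
    Fintype.card ι1 = Fintype.card ι2 := by
  have a1 : Fintype.card ι1 ≤ Fintype.card ι2 := by
    calc Fintype.card ι1 = (1 : Matrix ι1 ι1 k).rank := (Matrix.rank_one).symm
      _ = (S' * S).rank := by rw [h2]
      _ ≤ S'.rank := Matrix.rank_mul_le_left _ _
      _ ≤ Fintype.card ι2 := Matrix.rank_le_card_width _
  have a2 : Fintype.card ι2 ≤ Fintype.card ι1 := by
    calc Fintype.card ι2 = (1 : Matrix ι2 ι2 k).rank := (Matrix.rank_one).symm
      _ = (S * S').rank := by rw [h1]
      _ ≤ S.rank := Matrix.rank_mul_le_left _ _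
      _ ≤ Fintype.card ι1 := Matrix.rank_le_card_width _
  omega

lemma kiso_card1 {M N : KRep k} (h : KIso M N) : Fintype.card M.ι1 = Fintype.card N.ι1 := by
  obtain ⟨S, T, S', T', hSS', hS'S, _, _, _, _⟩ := h
  exact card_eq_of_inv S S' hSS' hS'S

lemma kiso_card2 {M N : KRep k} (h : KIso M N) : Fintype.card M.ι2 = Fintype.card N.ι2 := by
  obtain ⟨S, T, S', T', _, _, hTT', hT'T, _, _⟩ := h
  exact card_eq_of_inv T T' hTT' hT'T


open Module LinearMap

/-- transport along S -/
def transportMap {M N : KRep k} (m : ℕ) (S : Matrix N.ι1 M.ι1 k) :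
    (Fin m × M.ι1 → k) →ₗ[k] (Fin m × N.ι1 → k) :=
  LinearMap.pi fun p =>
    (LinearMap.proj p.2) ∘ₗ S.mulVecLin ∘ₗ LinearMap.funLeft k k (fun c => (p.1, c))

lemma transportMap_apply {M N : KRep k} (m : ℕ) (S : Matrix N.ι1 M.ι1 k)
    (x : Fin m × M.ι1 → k) (p : Fin m × N.ι1) :
    transportMap m S x p = S.mulVec (fun c => x (p.1, c)) p.2 := rfl

lemma nullity_le_of_kiso {M N : KRep k} (h : KIso M N) (m : ℕ) :
    Module.finrank k (LinearMap.ker (prepBlockMat M m).mulVecLin)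
      ≤ Module.finrank k (LinearMap.ker (prepBlockMat N m).mulVecLin) := by
  obtain ⟨S, T, S', T', hSS', hS'S, hTT', hT'T, hA, hB⟩ := h
  have h1 : transportMap m S ∘ₗ transportMap m S' = LinearMap.id := by
    refine LinearMap.ext fun x => ?_
    funext p
    show transportMap m S (transportMap m S' x) p = x p
    rw [transportMap_apply]
    have : (fun c => transportMap m S' x (p.1, c))
        = S'.mulVec (fun c' => x (p.1, c')) := rfl
    rw [this, Matrix.mulVec_mulVec, hSS', Matrix.one_mulVec]
  have h2 : transportMap m S' ∘ₗ transportMap m S = LinearMap.id := by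
    refine LinearMap.ext fun x => ?_
    funext p
    show transportMap m S' (transportMap m S x) p = x p
    rw [transportMap_apply]
    have : (fun c => transportMap m S x (p.1, c))
        = S.mulVec (fun c' => x (p.1, c')) := rfl
    rw [this, Matrix.mulVec_mulVec, hS'S, Matrix.one_mulVec]
  have hmap : (LinearMap.ker (prepBlockMat M m).mulVecLin).map (transportMap m S)
      ≤ LinearMap.ker (prepBlockMat N m).mulVecLin := by
    rintro _ ⟨x, hx, rfl⟩
    simp only [SetLike.mem_coe] at hx
    rw [mem_ker_iff] at hx
    rw [mem_ker_iff]
    intro i r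
    have e1 : (fun c => transportMap m S x (fIdx i, c))
        = S.mulVec (fun c' => x (fIdx i, c')) := rfl
    have e2 : (fun c => transportMap m S x (sIdx i, c))
        = S.mulVec (fun c' => x (sIdx i, c')) := rfl
    rw [e1, e2, Matrix.mulVec_mulVec, Matrix.mulVec_mulVec, ← hB, ← hA,
      ← Matrix.mulVec_mulVec, ← Matrix.mulVec_mulVec]
    have hz : (M.B.mulVec fun c' => x (fIdx i, c')) + (M.A.mulVec fun c' => x (sIdx i, c'))
        = 0 := by
      funext r'
      exact hx i r'
    calc T.mulVec (M.B.mulVec fun c' => x (fIdx i, c')) r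
          + T.mulVec (M.A.mulVec fun c' => x (sIdx i, c')) r
        = T.mulVec ((M.B.mulVec fun c' => x (fIdx i, c'))
            + (M.A.mulVec fun c' => x (sIdx i, c'))) r := by rw [Matrix.mulVec_add]; rfl
      _ = 0 := by rw [hz, Matrix.mulVec_zero]; rfl
  let E : (Fin m × M.ι1 → k) ≃ₗ[k] (Fin m × N.ι1 → k) :=
    LinearEquiv.ofLinear (transportMap m S) (transportMap m S') h1 h2
  have hcoe : (E : (Fin m × M.ι1 → k) →ₗ[k] (Fin m × N.ι1 → k)) = transportMap m S := rfl
  calc Module.finrank k (LinearMap.ker (prepBlockMat M m).mulVecLin)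
      = Module.finrank k ((LinearMap.ker (prepBlockMat M m).mulVecLin).map
          (E : (Fin m × M.ι1 → k) →ₗ[k] (Fin m × N.ι1 → k))) :=
        (LinearEquiv.finrank_map_eq E _).symm
    _ ≤ _ := Submodule.finrank_mono (by rw [hcoe]; exact hmap)

lemma nullity_eq_of_kiso {M N : KRep k} (h : KIso M N) (m : ℕ) :
    Module.finrank k (LinearMap.ker (prepBlockMat M m).mulVecLin)
      = Module.finrank k (LinearMap.ker (prepBlockMat N m).mulVecLin) :=
  le_antisymm (nullity_le_of_kiso h m) (nullity_le_of_kiso (kiso_symm h) m)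

lemma rank_eq_of_kiso {M N : KRep k} (h : KIso M N) (m : ℕ) :
    (prepBlockMat M m).rank = (prepBlockMat N m).rank := by
  have h1 := rank_add_nullity' M m
  have h2 := rank_add_nullity' N m
  have h3 := nullity_eq_of_kiso h m
  have h4 := kiso_card1 h
  rw [h4] at h1
  omega

lemma blockDiagonal'_mulVec {ι : Type} [Fintype ι] [DecidableEq ι] {m' n' : ι → Type}
    [∀ i, Fintype (m' i)] [∀ i, Fintype (n' i)] [∀ i, DecidableEq (n' i)]
    (Mx : ∀ i, Matrix (m' i) (n' i) k)
    (y : (Σ i, n' i) → k) (p : Σ i, m' i) :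
    (Matrix.blockDiagonal' Mx).mulVec y p = (Mx p.1).mulVec (fun c => y ⟨p.1, c⟩) p.2 := by
  obtain ⟨j, r⟩ := p
  rw [Matrix.mulVec, dotProduct, ← Finset.univ_sigma_univ, Finset.sum_sigma]
  rw [Finset.sum_eq_single j]
  · simp [Matrix.blockDiagonal'_apply_eq, Matrix.mulVec, dotProduct]
  · intro j' _ hj'
    apply Finset.sum_eq_zero
    intro c _
    rw [Matrix.blockDiagonal'_apply_ne _ _ _ (Ne.symm hj')]
    exact zero_mul _
  · intro hj
    exact absurd (Finset.mem_univ j) hj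

lemma mem_ker_ksum_iff {mm : ℕ} (V : Fin mm → KRep k) (m : ℕ)
    (x : Fin m × (Σ j, (V j).ι1) → k) :
    x ∈ LinearMap.ker (prepBlockMat (KSum V) m).mulVecLin ↔
      ∀ j, (fun p : Fin m × (V j).ι1 => x (p.1, ⟨j, p.2⟩))
        ∈ LinearMap.ker (prepBlockMat (V j) m).mulVecLin := by
  erw [mem_ker_iff (KSum V) m x]
  simp only [mem_ker_iff]
  have hBmv : ∀ (y : (Σ j, (V j).ι1) → k) (q : Σ j, (V j).ι2),
      (KSum V).B.mulVec y q = (V q.1).B.mulVec (fun c => y ⟨q.1, c⟩) q.2 := fun y q =>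
    blockDiagonal'_mulVec (fun j => (V j).B) y q
  have hAmv : ∀ (y : (Σ j, (V j).ι1) → k) (q : Σ j, (V j).ι2),
      (KSum V).A.mulVec y q = (V q.1).A.mulVec (fun c => y ⟨q.1, c⟩) q.2 := fun y q =>
    blockDiagonal'_mulVec (fun j => (V j).A) y q
  constructor
  · intro h j i r
    have := h i ⟨j, r⟩
    erw [hBmv, hAmv] at this; exact this
  · intro h i q
    obtain ⟨j, r⟩ := q
    erw [hBmv, hAmv]
    exact h j i r

lemma nullity_ksum {mm : ℕ} (V : Fin mm → KRep k) (m : ℕ) :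
    Module.finrank k (LinearMap.ker (prepBlockMat (KSum V) m).mulVecLin)
      = ∑ j, Module.finrank k (LinearMap.ker (prepBlockMat (V j) m).mulVecLin) := by
  classical
  set F : (∀ j, LinearMap.ker (prepBlockMat (V j) m).mulVecLin)
      →ₗ[k] (Fin m × (Σ j, (V j).ι1) → k) :=
    LinearMap.pi fun q => (LinearMap.proj (q.1, q.2.2)) ∘ₗ
      (Submodule.subtype _) ∘ₗ (LinearMap.proj q.2.1) with hF
  have hFapp : ∀ y (q : Fin m × (Σ j, (V j).ι1)), F y q = (y q.2.1).1 (q.1, q.2.2) :=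
    fun y q => rfl
  have h0 : ∀ y, F y = 0 → y = 0 := by
    intro y hy
    funext j
    apply Subtype.ext
    funext p
    have := congrFun hy (p.1, ⟨j, p.2⟩)
    exact this
  have hinj : Function.Injective F := LinearMap.ker_eq_bot.mp (LinearMap.ker_eq_bot'.mpr h0)
  have hrange : LinearMap.range F = LinearMap.ker (prepBlockMat (KSum V) m).mulVecLin := by
    apply le_antisymm
    · rintro _ ⟨y, rfl⟩
      erw [mem_ker_ksum_iff]
      intro j
      exact (y j).2
    · intro x hx
      exact ⟨fun j => ⟨fun p => x (p.1, ⟨j, p.2⟩), (mem_ker_ksum_iff V m x).mp hx j⟩,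
        by funext q; rfl⟩
  rw [← hrange]
  calc Module.finrank k (LinearMap.range F)
      = Module.finrank k (∀ j, LinearMap.ker (prepBlockMat (V j) m).mulVecLin) :=
        (LinearEquiv.finrank_eq (LinearEquiv.ofInjective F hinj)).symm
    _ = ∑ j, Module.finrank k (LinearMap.ker (prepBlockMat (V j) m).mulVecLin) :=
        Module.finrank_pi_fintype k

lemma rank_ksum {mm : ℕ} (V : Fin mm → KRep k) (m : ℕ) :
    (prepBlockMat (KSum V) m).rank = ∑ j, (prepBlockMat (V j) m).rank := by
  have h1 := rank_add_nullity' (KSum V) m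
  rw [nullity_ksum] at h1
  have hc : Fintype.card (KSum V).ι1 = ∑ j, Fintype.card (V j).ι1 := by
    exact Fintype.card_sigma
  have h2 : ∑ j, ((prepBlockMat (V j) m).rank
      + Module.finrank k (LinearMap.ker (prepBlockMat (V j) m).mulVecLin))
      = ∑ j, m * Fintype.card (V j).ι1 :=
    Finset.sum_congr rfl fun j _ => rank_add_nullity' (V j) m
  rw [Finset.sum_add_distrib, ← Finset.mul_sum] at h2
  rw [hc] at h1
  omega


lemma nullity_eq_of_param {ι1 ι2 : Type} [Fintype ι1] [Fintype ι2] [DecidableEq ι2]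
    {D : Type} [AddCommGroup D] [Module k D] (A : Matrix ι1 ι2 k)
    (F : D →ₗ[k] (ι2 → k)) (hinj : Function.Injective F)
    (hrange : LinearMap.range F = LinearMap.ker A.mulVecLin) :
    Module.finrank k (LinearMap.ker A.mulVecLin) = Module.finrank k D := by
  rw [← hrange]
  exact (LinearEquiv.finrank_eq (LinearEquiv.ofInjective F hinj)).symm

lemma sum_if_eq {s : ℕ} (y : Fin s → k) (p : Fin s → Prop) [DecidablePred p] (c0 : Fin s)
    (h : ∀ c, p c ↔ c = c0) :
    ∑ c, (if p c then (1 : k) else 0) * y c = y c0 := by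
  rw [Finset.sum_eq_single c0]
  · rw [if_pos ((h c0).mpr rfl), one_mul]
  · intro c _ hc
    rw [if_neg (fun hp => hc ((h c).mp hp)), zero_mul]
  · intro hh
    exact absurd (Finset.mem_univ c0) hh

lemma sum_if_eq_zero {s : ℕ} (y : Fin s → k) (p : Fin s → Prop) [DecidablePred p]
    (h : ∀ c, ¬ p c) :
    ∑ c, (if p c then (1 : k) else 0) * y c = 0 :=
  Finset.sum_eq_zero fun c _ => by rw [if_neg (h c), zero_mul]

lemma nullity_rreg (t : ℕ) (lam : k) (m : ℕ) (hm : 1 ≤ m) :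
    Module.finrank k (LinearMap.ker (prepBlockMat (Rreg t lam) m).mulVecLin) = t := by
  classical
  set J : Matrix (Fin t) (Fin t) k := jordanCell t lam with hJ
  set F : (Fin t → k) →ₗ[k] (Fin m × Fin t → k) :=
    LinearMap.pi (fun q : Fin m × Fin t => (LinearMap.proj q.2) ∘ₗ ((-J) ^ (q.1 : ℕ)).mulVecLin)
    with hFdef
  have hFapp : ∀ v q, F v q = ((-J) ^ (q.1 : ℕ)).mulVec v q.2 := fun v q => rfl
  have h0 : ∀ v, F v = 0 → v = 0 := by
    intro v hv
    funext c
    have h := congrFun hv (⟨0, hm⟩, c)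
    rw [hFapp] at h
    simpa [Matrix.one_mulVec] using h
  have hinj : Function.Injective F := LinearMap.ker_eq_bot.mp (LinearMap.ker_eq_bot'.mpr h0)
  have hBB : (Rreg t lam).B = J := rfl
  have hAA : (Rreg t lam).A = (1 : Matrix (Fin t) (Fin t) k) := rfl
  have hrange : LinearMap.range F = LinearMap.ker (prepBlockMat (Rreg t lam) m).mulVecLin := by
    apply le_antisymm
    · rintro _ ⟨v, rfl⟩
      erw [mem_ker_iff]
      intro i r
      show J.mulVec (((-J) ^ (i : ℕ)).mulVec v) r
          + Matrix.mulVec (1 : Matrix (Fin t) (Fin t) k) (((-J) ^ ((i : ℕ) + 1)).mulVec v) r = 0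
      rw [Matrix.one_mulVec, Matrix.mulVec_mulVec]
      have e3 : (-J) ^ ((i : ℕ) + 1) = -(J * (-J) ^ (i : ℕ)) := by
        rw [pow_succ', neg_mul]
      rw [e3, Matrix.neg_mulVec]
      exact add_neg_cancel _
    · intro x hx
      erw [mem_ker_iff] at hx
      have claim : ∀ (i : ℕ) (hi : i < m),
          (fun c => x (⟨i, hi⟩, c)) = ((-J) ^ i).mulVec (fun c => x (⟨0, hm⟩, c)) := by
        intro i
        induction i with
        | zero =>
          intro hi
          rw [pow_zero, Matrix.one_mulVec]
        | succ i ih =>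
          intro hi
          have hi0 : i < m := by omega
          have hi' : i < m - 1 := by omega
          funext c
          have h1 : J.mulVec (fun c' => x (⟨i, hi0⟩, c')) c
              + Matrix.mulVec (1 : Matrix (Fin t) (Fin t) k)
                (fun c' => x (⟨i + 1, hi⟩, c')) c = 0 := hx ⟨i, hi'⟩ c
          rw [Matrix.one_mulVec] at h1
          have h2 : x (⟨i + 1, hi⟩, c) = -(J.mulVec (fun c' => x (⟨i, hi0⟩, c')) c) :=
            eq_neg_of_add_eq_zero_right h1
          rw [h2, ih hi0, Matrix.mulVec_mulVec, pow_succ', neg_mul, Matrix.neg_mulVec]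
          simp
      refine ⟨fun c => x (⟨0, hm⟩, c), ?_⟩
      funext q
      obtain ⟨iq, cq⟩ := q
      exact (congrFun (claim (iq : ℕ) iq.2) cq).symm
  have hfin := nullity_eq_of_param (prepBlockMat (Rreg t lam) m) F hinj hrange
  rw [Module.finrank_pi, Fintype.card_fin] at hfin
  exact hfin



lemma nullity_rinf (t : ℕ) (m : ℕ) (hm : 1 ≤ m) :
    Module.finrank k (LinearMap.ker (prepBlockMat (Rinf t : KRep k) m).mulVecLin) = t := by
  classical
  set J : Matrix (Fin t) (Fin t) k := jordanCell t 0 with hJ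
  have hm' : m - 1 < m := by omega
  set F : (Fin t → k) →ₗ[k] (Fin m × Fin t → k) :=
    LinearMap.pi (fun q : Fin m × Fin t =>
      (LinearMap.proj q.2) ∘ₗ ((-J) ^ (m - 1 - (q.1 : ℕ))).mulVecLin) with hFdef
  have hFapp : ∀ v q, F v q = ((-J) ^ (m - 1 - (q.1 : ℕ))).mulVec v q.2 := fun v q => rfl
  have h0 : ∀ v, F v = 0 → v = 0 := by
    intro v hv
    funext c
    have h := congrFun hv (⟨m - 1, hm'⟩, c)
    rw [hFapp] at h
    simp only [Nat.sub_self, pow_zero] at h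
    rw [Matrix.one_mulVec] at h
    exact h
  have hinj : Function.Injective F := LinearMap.ker_eq_bot.mp (LinearMap.ker_eq_bot'.mpr h0)
  have hrange : LinearMap.range F = LinearMap.ker (prepBlockMat (Rinf t) m).mulVecLin := by
    apply le_antisymm
    · rintro _ ⟨v, rfl⟩
      erw [mem_ker_iff]
      intro i r
      show Matrix.mulVec (1 : Matrix (Fin t) (Fin t) k)
          (((-J) ^ (m - 1 - (i : ℕ))).mulVec v) r
          + J.mulVec (((-J) ^ (m - 1 - ((i : ℕ) + 1))).mulVec v) r = 0
      rw [Matrix.one_mulVec, Matrix.mulVec_mulVec]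
      have hlt := i.2
      have e0 : m - 1 - (i : ℕ) = (m - 1 - ((i : ℕ) + 1)) + 1 := by omega
      rw [e0, pow_succ', neg_mul, Matrix.neg_mulVec]
      exact neg_add_cancel _
    · intro x hx
      erw [mem_ker_iff] at hx
      have claim : ∀ (d : ℕ) (hd : d < m),
          (fun c => x (⟨m - 1 - d, by omega⟩, c))
            = ((-J) ^ d).mulVec (fun c => x (⟨m - 1, hm'⟩, c)) := by
        intro d
        induction d with
        | zero =>
          intro hd
          rw [pow_zero, Matrix.one_mulVec]
          rfl
        | succ d ih =>
          intro hd
          have hd0 : d < m := by omega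
          have hi' : m - 2 - d < m - 1 := by omega
          have hub : m - 2 - d + 1 < m := by omega
          have hub2 : m - 1 - d < m := by omega
          have hub3 : m - 2 - d < m := by omega
          have hub4 : m - 1 - (d + 1) < m := by omega
          funext c
          have h1 : Matrix.mulVec (1 : Matrix (Fin t) (Fin t) k)
              (fun c' => x (⟨m - 2 - d, hub3⟩, c')) c
              + J.mulVec (fun c' => x (⟨m - 2 - d + 1, hub⟩, c')) c = 0 :=
            hx ⟨m - 2 - d, hi'⟩ c
          rw [Matrix.one_mulVec] at h1
          have e1 : (⟨m - 2 - d + 1, hub⟩ : Fin m) = ⟨m - 1 - d, hub2⟩ := by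
            apply Fin.ext
            simp only []
            omega
          rw [e1] at h1
          have h2 : x (⟨m - 2 - d, hub3⟩, c)
              = -(J.mulVec (fun c' => x (⟨m - 1 - d, hub2⟩, c')) c) :=
            eq_neg_of_add_eq_zero_left h1
          have e2 : (⟨m - 1 - (d + 1), hub4⟩ : Fin m) = ⟨m - 2 - d, hub3⟩ := by
            apply Fin.ext
            simp only []
            omega
          show x (⟨m - 1 - (d + 1), hub4⟩, c) = _
          rw [e2, h2, ih hd0, Matrix.mulVec_mulVec, pow_succ', neg_mul, Matrix.neg_mulVec]
          simp
      refine ⟨fun c => x (⟨m - 1, hm'⟩, c), ?_⟩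
      funext q
      obtain ⟨iq, cq⟩ := q
      have hdlt : m - 1 - (iq : ℕ) < m := by omega
      have e3 : (⟨m - 1 - (m - 1 - (iq : ℕ)), by omega⟩ : Fin m) = iq := by
        apply Fin.ext
        simp only []
        have := iq.2
        omega
      calc F (fun c => x (⟨m - 1, hm'⟩, c)) (iq, cq)
          = ((-J) ^ (m - 1 - (iq : ℕ))).mulVec (fun c => x (⟨m - 1, hm'⟩, c)) cq := rfl
        _ = x (⟨m - 1 - (m - 1 - (iq : ℕ)), by omega⟩, cq) :=
            (congrFun (claim (m - 1 - (iq : ℕ)) hdlt) cq).symm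
        _ = x (iq, cq) := by rw [e3]
  have hfin := nullity_eq_of_param (prepBlockMat (Rinf t) m) F hinj hrange
  rw [Module.finrank_pi, Fintype.card_fin] at hfin
  exact hfin


lemma irepB_mulVec {t : ℕ} (y : Fin t → k) (r : Fin (t - 1)) :
    (Irep t : KRep k).B.mulVec y r = y ⟨(r : ℕ) + 1, by have := r.2; omega⟩ := by
  have h : ∀ c : Fin t, ((r : ℕ) + 1 = (c : ℕ))
      ↔ c = ⟨(r : ℕ) + 1, by have := r.2; omega⟩ := by
    intro c
    simp only [Fin.ext_iff, Fin.val_mk]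
    constructor <;> omega
  exact sum_if_eq y _ _ h

lemma irepA_mulVec {t : ℕ} (y : Fin t → k) (r : Fin (t - 1)) :
    (Irep t : KRep k).A.mulVec y r = y ⟨(r : ℕ), by have := r.2; omega⟩ := by
  have h : ∀ c : Fin t, ((r : ℕ) = (c : ℕ))
      ↔ c = ⟨(r : ℕ), by have := r.2; omega⟩ := by
    intro c
    simp only [Fin.ext_iff, Fin.val_mk]
    constructor <;> omega
  exact sum_if_eq y _ _ h

def irepParam (t m : ℕ) (v : (Fin t → k) × (Fin (m - 1) → k)) : Fin m × Fin t → k :=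
  fun q => if h : (q.1 : ℕ) + (q.2 : ℕ) < t
    then ((-1 : k) ^ (q.1 : ℕ)) * v.1 ⟨(q.1 : ℕ) + (q.2 : ℕ), h⟩
    else ((-1 : k) ^ (t - 1 - (q.2 : ℕ))) * v.2 ⟨(q.1 : ℕ) + (q.2 : ℕ) - t, by
      have := q.1.2; have := q.2.2; omega⟩

def irepParamL (t m : ℕ) : ((Fin t → k) × (Fin (m - 1) → k)) →ₗ[k] (Fin m × Fin t → k) where
  toFun := irepParam t m
  map_add' v w := by
    funext q
    simp only [irepParam, Pi.add_apply]
    split <;> simp [Prod.fst_add, Prod.snd_add, Pi.add_apply] <;> ring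
  map_smul' a v := by
    funext q
    simp only [irepParam, Pi.smul_apply]
    split <;> simp [Prod.smul_fst, Prod.smul_snd, Pi.smul_apply, smul_eq_mul] <;> ring

lemma irepParam_pos (t m : ℕ) (v : (Fin t → k) × (Fin (m - 1) → k)) (i : ℕ) (hi : i < m)
    (s : ℕ) (hs : s < t) (h : i + s < t) :
    irepParamL t m v (⟨i, hi⟩, ⟨s, hs⟩) = ((-1 : k) ^ i) * v.1 ⟨i + s, h⟩ := by
  show irepParam t m v (⟨i, hi⟩, ⟨s, hs⟩) = _
  rw [irepParam, dif_pos h]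

lemma irepParam_neg (t m : ℕ) (v : (Fin t → k) × (Fin (m - 1) → k)) (i : ℕ) (hi : i < m)
    (s : ℕ) (hs : s < t) (h : ¬ (i + s < t)) (pf : i + s - t < m - 1) :
    irepParamL t m v (⟨i, hi⟩, ⟨s, hs⟩) = ((-1 : k) ^ (t - 1 - s)) * v.2 ⟨i + s - t, pf⟩ := by
  show irepParam t m v (⟨i, hi⟩, ⟨s, hs⟩) = _
  rw [irepParam, dif_neg h]

lemma nullity_irep (t m : ℕ) (ht : 1 ≤ t) (hm : 1 ≤ m) :
    Module.finrank k (LinearMap.ker (prepBlockMat (Irep t : KRep k) m).mulVecLin)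
      = t + (m - 1) := by
  classical
  set F := irepParamL (k := k) t m with hF
  have h0 : ∀ v, F v = 0 → v = 0 := by
    intro v hv
    have hv1 : v.1 = 0 := by
      funext s
      have h1 : F v (⟨0, hm⟩, ⟨(s : ℕ), s.2⟩) = 0 := congrFun hv (⟨0, hm⟩, ⟨(s : ℕ), s.2⟩)
      rw [irepParam_pos t m v 0 hm (s : ℕ) s.2 (by have := s.2; omega)] at h1
      rw [pow_zero, one_mul] at h1
      have e : (⟨0 + (s : ℕ), by have := s.2; omega⟩ : Fin t) = s := by
        apply Fin.ext
        simp only [Fin.val_mk]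
        omega
      rw [e] at h1
      exact h1
    have hv2 : v.2 = 0 := by
      funext i
      have hi1 : (i : ℕ) + 1 < m := by have := i.2; omega
      have ht' : t - 1 < t := by omega
      have hcn : ¬ ((i : ℕ) + 1 + (t - 1) < t) := by omega
      have pf : (i : ℕ) + 1 + (t - 1) - t < m - 1 := by have := i.2; omega
      have h1 : F v (⟨(i : ℕ) + 1, hi1⟩, ⟨t - 1, ht'⟩) = 0 :=
        congrFun hv (⟨(i : ℕ) + 1, hi1⟩, ⟨t - 1, ht'⟩)
      rw [irepParam_neg t m v ((i : ℕ) + 1) hi1 (t - 1) ht' hcn pf] at h1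
      rw [Nat.sub_self, pow_zero, one_mul] at h1
      have e : (⟨(i : ℕ) + 1 + (t - 1) - t, pf⟩ : Fin (m - 1)) = i := by
        apply Fin.ext
        simp only [Fin.val_mk]
        have := i.2
        omega
      rw [e] at h1
      exact h1
    exact Prod.ext hv1 hv2
  have hinj : Function.Injective F := LinearMap.ker_eq_bot.mp (LinearMap.ker_eq_bot'.mpr h0)
  have hrange : LinearMap.range F
      = LinearMap.ker (prepBlockMat (Irep t : KRep k) m).mulVecLin := by
    apply le_antisymm
    · rintro _ ⟨v, rfl⟩
      erw [mem_ker_iff]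
      have key : ∀ (i : Fin (m - 1)) (r : Fin (t - 1)),
          (Irep t : KRep k).B.mulVec (fun c => F v (fIdx i, c)) r
            + (Irep t : KRep k).A.mulVec (fun c => F v (sIdx i, c)) r = 0 := by
        intro i r
        have hi := i.2
        have hr := r.2
        have hB : (Irep t : KRep k).B.mulVec (fun c => F v (fIdx i, c)) r
            = F v (⟨(i : ℕ), by omega⟩, ⟨(r : ℕ) + 1, by omega⟩) := by
          erw [irepB_mulVec]
          rfl
        have hA : (Irep t : KRep k).A.mulVec (fun c => F v (sIdx i, c)) r
            = F v (⟨(i : ℕ) + 1, by omega⟩, ⟨(r : ℕ), by omega⟩) := by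
          erw [irepA_mulVec]
          rfl
        rw [hB, hA]
        by_cases hc : (i : ℕ) + ((r : ℕ) + 1) < t
        · rw [irepParam_pos t m v (i : ℕ) (by omega) ((r : ℕ) + 1) (by omega) hc,
            irepParam_pos t m v ((i : ℕ) + 1) (by omega) (r : ℕ) (by omega) (by omega)]
          have e : (⟨(i : ℕ) + ((r : ℕ) + 1), hc⟩ : Fin t)
              = ⟨(i : ℕ) + 1 + (r : ℕ), by omega⟩ := by
            apply Fin.ext
            simp only [Fin.val_mk]
            omega
          rw [e, pow_succ]
          ring
        · have pf1 : (i : ℕ) + ((r : ℕ) + 1) - t < m - 1 := by omega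
          have pf2 : (i : ℕ) + 1 + (r : ℕ) - t < m - 1 := by omega
          rw [irepParam_neg t m v (i : ℕ) (by omega) ((r : ℕ) + 1) (by omega) hc pf1,
            irepParam_neg t m v ((i : ℕ) + 1) (by omega) (r : ℕ) (by omega) (by omega) pf2]
          have e : (⟨(i : ℕ) + ((r : ℕ) + 1) - t, pf1⟩ : Fin (m - 1))
              = ⟨(i : ℕ) + 1 + (r : ℕ) - t, pf2⟩ := by
            apply Fin.ext
            simp only [Fin.val_mk]
            omega
          have esgn : ((-1 : k) ^ (t - 1 - (r : ℕ)))
              = -((-1 : k) ^ (t - 1 - ((r : ℕ) + 1))) := by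
            have e7 : t - 1 - (r : ℕ) = (t - 1 - ((r : ℕ) + 1)) + 1 := by omega
            rw [e7, pow_succ]
            ring
          rw [e, esgn]
          ring
      exact key
    · intro x hxmem
      have hx : ∀ (i : Fin (m - 1)) (r : Fin (t - 1)),
          (Irep t : KRep k).B.mulVec (fun c => x (fIdx i, c)) r
            + (Irep t : KRep k).A.mulVec (fun c => x (sIdx i, c)) r = 0 :=
        (mem_ker_iff _ _ _).mp hxmem
      have hrec : ∀ (i : ℕ) (hi : i < m - 1) (s : ℕ) (hs : s < t - 1),
          x (⟨i + 1, by omega⟩, ⟨s, by omega⟩) = -(x (⟨i, by omega⟩, ⟨s + 1, by omega⟩)) := by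
        intro i hi s hs
        have h1 := hx ⟨i, hi⟩ ⟨s, hs⟩
        erw [irepB_mulVec, irepA_mulVec] at h1
        have h2 : x (⟨i, by omega⟩, ⟨s + 1, by omega⟩)
            + x (⟨i + 1, by omega⟩, ⟨s, by omega⟩) = 0 := h1
        exact eq_neg_of_add_eq_zero_right h2
      set v1 : Fin t → k := fun s => x (⟨0, hm⟩, s) with hv1
      set v2 : Fin (m - 1) → k := fun i => x (⟨(i : ℕ) + 1, by have := i.2; omega⟩,
        ⟨t - 1, by omega⟩) with hv2
      have claim : ∀ (i : ℕ) (hi : i < m) (s : ℕ) (hs : s < t),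
          x (⟨i, hi⟩, ⟨s, hs⟩) = F (v1, v2) (⟨i, hi⟩, ⟨s, hs⟩) := by
        intro i
        induction i with
        | zero =>
          intro hi s hs
          rw [irepParam_pos t m (v1, v2) 0 hi s hs (by omega), pow_zero, one_mul]
          have e : (⟨0 + s, by omega⟩ : Fin t) = ⟨s, hs⟩ := by
            apply Fin.ext
            simp only [Fin.val_mk]
            omega
          rw [e]
        | succ i ih =>
          intro hi s hs
          have hi0 : i < m := by omega
          have hi' : i < m - 1 := by omega
          by_cases hsc : s = t - 1
          · have hcn : ¬ (i + 1 + s < t) := by omega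
            have pf : i + 1 + s - t < m - 1 := by omega
            rw [irepParam_neg t m (v1, v2) (i + 1) hi s hs hcn pf]
            have e2 : t - 1 - s = 0 := by omega
            rw [e2, pow_zero, one_mul]
            show x (⟨i + 1, hi⟩, ⟨s, hs⟩) = v2 ⟨i + 1 + s - t, pf⟩
            have e4 : (⟨i + 1 + s - t, pf⟩ : Fin (m - 1)) = ⟨i, hi'⟩ := by
              apply Fin.ext
              simp only [Fin.val_mk]
              omega
            have e5 : (⟨s, hs⟩ : Fin t) = ⟨t - 1, by omega⟩ := by
              apply Fin.ext
              simp only [Fin.val_mk]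
              omega
            rw [e4, e5]
          · have hs' : s < t - 1 := by omega
            have h2 : x (⟨i + 1, hi⟩, ⟨s, hs⟩)
                = -(x (⟨i, hi0⟩, ⟨s + 1, by omega⟩)) := hrec i hi' s hs'
            rw [h2, ih hi0 (s + 1) (by omega)]
            by_cases hc : i + (s + 1) < t
            · rw [irepParam_pos t m (v1, v2) i hi0 (s + 1) (by omega) hc,
                irepParam_pos t m (v1, v2) (i + 1) hi s hs (by omega)]
              have e : (⟨i + (s + 1), hc⟩ : Fin t) = ⟨i + 1 + s, by omega⟩ := by
                apply Fin.ext
                simp only [Fin.val_mk]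
                omega
              rw [e, pow_succ]
              ring
            · have pf1 : i + (s + 1) - t < m - 1 := by omega
              have pf2 : i + 1 + s - t < m - 1 := by omega
              rw [irepParam_neg t m (v1, v2) i hi0 (s + 1) (by omega) hc pf1,
                irepParam_neg t m (v1, v2) (i + 1) hi s hs (by omega) pf2]
              have e : (⟨i + (s + 1) - t, pf1⟩ : Fin (m - 1)) = ⟨i + 1 + s - t, pf2⟩ := by
                apply Fin.ext
                simp only [Fin.val_mk]
                omega
              have esgn : ((-1 : k) ^ (t - 1 - s))
                  = -((-1 : k) ^ (t - 1 - (s + 1))) := by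
                have e7 : t - 1 - s = (t - 1 - (s + 1)) + 1 := by omega
                rw [e7, pow_succ]
                ring
              rw [e, esgn]
              ring
      refine ⟨(v1, v2), ?_⟩
      funext q
      obtain ⟨iq, sq⟩ := q
      exact (claim (iq : ℕ) iq.2 (sq : ℕ) sq.2).symm
  have hfin := nullity_eq_of_param (prepBlockMat (Irep t : KRep k) m) F hinj hrange
  rw [Module.finrank_prod, Module.finrank_pi, Module.finrank_pi,
    Fintype.card_fin, Fintype.card_fin] at hfin
  exact hfin


lemma prepB_mulVec {t : ℕ} (y : Fin (t - 1) → k) (r : Fin t) :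
    (Prep t : KRep k).B.mulVec y r
      = if h : 1 ≤ (r : ℕ) then y ⟨(r : ℕ) - 1, by have := r.2; omega⟩ else 0 := by
  split
  · next h =>
    have hiff : ∀ c : Fin (t - 1), ((r : ℕ) = (c : ℕ) + 1)
        ↔ c = ⟨(r : ℕ) - 1, by have := r.2; omega⟩ := by
      intro c
      simp only [Fin.ext_iff, Fin.val_mk]
      constructor <;> omega
    exact sum_if_eq y _ _ hiff
  · next h =>
    exact sum_if_eq_zero y _ (fun c => by omega)

lemma prepA_mulVec {t : ℕ} (y : Fin (t - 1) → k) (r : Fin t) :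
    (Prep t : KRep k).A.mulVec y r
      = if h : (r : ℕ) < t - 1 then y ⟨(r : ℕ), h⟩ else 0 := by
  split
  · next h =>
    have hiff : ∀ c : Fin (t - 1), ((r : ℕ) = (c : ℕ))
        ↔ c = ⟨(r : ℕ), h⟩ := by
      intro c
      simp only [Fin.ext_iff, Fin.val_mk]
      constructor <;> omega
    exact sum_if_eq y _ _ hiff
  · next h =>
    exact sum_if_eq_zero y _ (fun c => by have := c.2; omega)

def prepParam (t m : ℕ) (v : Fin (t - min t m) → k) : Fin m × Fin (t - 1) → k :=
  fun q => if h : (q.1 : ℕ) ≤ (q.2 : ℕ) ∧ (q.2 : ℕ) - (q.1 : ℕ) < t - min t m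
    then ((-1 : k) ^ (q.1 : ℕ)) * v ⟨(q.2 : ℕ) - (q.1 : ℕ), h.2⟩ else 0

def prepParamL (t m : ℕ) : (Fin (t - min t m) → k) →ₗ[k] (Fin m × Fin (t - 1) → k) where
  toFun := prepParam t m
  map_add' v w := by
    funext q
    by_cases h : (q.1 : ℕ) ≤ (q.2 : ℕ) ∧ (q.2 : ℕ) - (q.1 : ℕ) < t - min t m
    · simp only [prepParam, Pi.add_apply, dif_pos h]
      ring
    · simp only [prepParam, Pi.add_apply, dif_neg h]
      ring
  map_smul' a v := by
    funext q
    by_cases h : (q.1 : ℕ) ≤ (q.2 : ℕ) ∧ (q.2 : ℕ) - (q.1 : ℕ) < t - min t m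
    · simp only [prepParam, Pi.smul_apply, smul_eq_mul, RingHom.id_apply, dif_pos h]
      ring
    · simp only [prepParam, Pi.smul_apply, smul_eq_mul, RingHom.id_apply, dif_neg h]
      ring

lemma prepParam_pos (t m : ℕ) (v : Fin (t - min t m) → k) (i : ℕ) (hi : i < m)
    (s : ℕ) (hs : s < t - 1) (h : i ≤ s ∧ s - i < t - min t m) :
    prepParamL t m v (⟨i, hi⟩, ⟨s, hs⟩) = ((-1 : k) ^ i) * v ⟨s - i, h.2⟩ := by
  show prepParam t m v (⟨i, hi⟩, ⟨s, hs⟩) = _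
  rw [prepParam, dif_pos h]

lemma prepParam_neg (t m : ℕ) (v : Fin (t - min t m) → k) (i : ℕ) (hi : i < m)
    (s : ℕ) (hs : s < t - 1) (h : ¬ (i ≤ s ∧ s - i < t - min t m)) :
    prepParamL t m v (⟨i, hi⟩, ⟨s, hs⟩) = 0 := by
  show prepParam t m v (⟨i, hi⟩, ⟨s, hs⟩) = _
  rw [prepParam, dif_neg h]

lemma nullity_prep (t m : ℕ) (ht : 1 ≤ t) (hm : 1 ≤ m) :
    Module.finrank k (LinearMap.ker (prepBlockMat (Prep t : KRep k) m).mulVecLin)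
      = t - min t m := by
  classical
  set F := prepParamL (k := k) t m with hF
  have h0 : ∀ v, F v = 0 → v = 0 := by
    intro v hv
    funext s
    have hslt : (s : ℕ) < t - 1 := by have := s.2; omega
    have h1 : F v (⟨0, hm⟩, ⟨(s : ℕ), hslt⟩) = 0 := congrFun hv (⟨0, hm⟩, ⟨(s : ℕ), hslt⟩)
    rw [prepParam_pos t m v 0 hm (s : ℕ) hslt ⟨by omega, by have := s.2; omega⟩] at h1
    rw [pow_zero, one_mul] at h1
    have e : (⟨(s : ℕ) - 0, by have := s.2; omega⟩ : Fin (t - min t m)) = s := by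
      apply Fin.ext
      simp only [Fin.val_mk]
      omega
    rw [e] at h1
    exact h1
  have hinj : Function.Injective F := LinearMap.ker_eq_bot.mp (LinearMap.ker_eq_bot'.mpr h0)
  have hrange : LinearMap.range F
      = LinearMap.ker (prepBlockMat (Prep t : KRep k) m).mulVecLin := by
    apply le_antisymm
    · rintro _ ⟨v, rfl⟩
      erw [mem_ker_iff]
      have key : ∀ (i : Fin (m - 1)) (r : Fin t),
          (Prep t : KRep k).B.mulVec (fun c => F v (fIdx i, c)) r
            + (Prep t : KRep k).A.mulVec (fun c => F v (sIdx i, c)) r = 0 := by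
        intro i r
        have hi := i.2
        have hr := r.2
        erw [prepB_mulVec, prepA_mulVec]
        by_cases h1 : 1 ≤ (r : ℕ)
        · rw [dif_pos h1]
          have eB : F v (fIdx i, (⟨(r : ℕ) - 1, by omega⟩ : Fin (t - 1)))
              = F v (⟨(i : ℕ), by omega⟩, ⟨(r : ℕ) - 1, by omega⟩) := rfl
          rw [eB]
          by_cases h2 : (r : ℕ) < t - 1
          · rw [dif_pos h2]
            have eA : F v (sIdx i, (⟨(r : ℕ), h2⟩ : Fin (t - 1)))
                = F v (⟨(i : ℕ) + 1, by omega⟩, ⟨(r : ℕ), h2⟩) := rfl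
            rw [eA]
            by_cases hc : (i : ℕ) ≤ (r : ℕ) - 1 ∧ (r : ℕ) - 1 - (i : ℕ) < t - min t m
            · rw [prepParam_pos t m v (i : ℕ) (by omega) ((r : ℕ) - 1) (by omega) hc,
                prepParam_pos t m v ((i : ℕ) + 1) (by omega) (r : ℕ) h2
                  ⟨by omega, by omega⟩]
              have e : (⟨(r : ℕ) - 1 - (i : ℕ), hc.2⟩ : Fin (t - min t m))
                  = ⟨(r : ℕ) - ((i : ℕ) + 1), by omega⟩ := by
                apply Fin.ext
                simp only [Fin.val_mk]
                omega
              rw [e, pow_succ]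
              ring
            · rw [prepParam_neg t m v (i : ℕ) (by omega) ((r : ℕ) - 1) (by omega) hc,
                prepParam_neg t m v ((i : ℕ) + 1) (by omega) (r : ℕ) h2 (by omega)]
              simp
          · rw [dif_neg h2]
            rw [prepParam_neg t m v (i : ℕ) (by omega) ((r : ℕ) - 1) (by omega) (by omega)]
            simp
        · rw [dif_neg h1]
          by_cases h2 : (r : ℕ) < t - 1
          · rw [dif_pos h2]
            have eA : F v (sIdx i, (⟨(r : ℕ), h2⟩ : Fin (t - 1)))
                = F v (⟨(i : ℕ) + 1, by omega⟩, ⟨(r : ℕ), h2⟩) := rfl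
            rw [eA]
            rw [prepParam_neg t m v ((i : ℕ) + 1) (by omega) (r : ℕ) h2 (by omega)]
            simp
          · rw [dif_neg h2]
            simp
      exact key
    · intro x hxmem
      have hx : ∀ (i : Fin (m - 1)) (r : Fin t),
          (Prep t : KRep k).B.mulVec (fun c => x (fIdx i, c)) r
            + (Prep t : KRep k).A.mulVec (fun c => x (sIdx i, c)) r = 0 :=
        (mem_ker_iff _ _ _).mp hxmem
      have rec1 : ∀ (i : ℕ) (hi : i < m - 1) (s : ℕ) (h1 : 1 ≤ s) (hs : s < t - 1),
          x (⟨i + 1, by omega⟩, ⟨s, hs⟩) = -(x (⟨i, by omega⟩, ⟨s - 1, by omega⟩)) := by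
        intro i hi s h1 hs
        have hcond := hx ⟨i, hi⟩ ⟨s, by omega⟩
        erw [prepB_mulVec, prepA_mulVec] at hcond
        rw [dif_pos (show 1 ≤ ((⟨s, by omega⟩ : Fin t) : ℕ) from h1),
          dif_pos (show ((⟨s, by omega⟩ : Fin t) : ℕ) < t - 1 from hs)] at hcond
        have h2 : x (⟨i, by omega⟩, ⟨s - 1, by omega⟩)
            + x (⟨i + 1, by omega⟩, ⟨s, hs⟩) = 0 := hcond
        exact eq_neg_of_add_eq_zero_right h2
      have rec2 : ∀ (i : ℕ) (hi : i < m - 1) (h0t : 0 < t - 1),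
          x (⟨i + 1, by omega⟩, ⟨0, h0t⟩) = 0 := by
        intro i hi h0t
        have hcond := hx ⟨i, hi⟩ ⟨0, by omega⟩
        erw [prepB_mulVec, prepA_mulVec] at hcond
        rw [dif_neg (show ¬ (1 ≤ ((⟨0, by omega⟩ : Fin t) : ℕ)) by simp),
          dif_pos (show ((⟨0, by omega⟩ : Fin t) : ℕ) < t - 1 from h0t)] at hcond
        have h2 : (0 : k) + x (⟨i + 1, by omega⟩, ⟨0, h0t⟩) = 0 := hcond
        rwa [zero_add] at h2
      have rec3 : ∀ (i : ℕ) (hi : i < m - 1) (h2t : 2 ≤ t),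
          x (⟨i, by omega⟩, ⟨t - 1 - 1, by omega⟩) = 0 := by
        intro i hi h2t
        have hcond := hx ⟨i, hi⟩ ⟨t - 1, by omega⟩
        erw [prepB_mulVec, prepA_mulVec] at hcond
        rw [dif_pos (show 1 ≤ ((⟨t - 1, by omega⟩ : Fin t) : ℕ) by
            simp only [Fin.val_mk]; omega),
          dif_neg (show ¬ (((⟨t - 1, by omega⟩ : Fin t) : ℕ) < t - 1) by
            simp only [Fin.val_mk]; omega)] at hcond
        have h2 : x (⟨i, by omega⟩, ⟨t - 1 - 1, by omega⟩) + (0 : k) = 0 := hcond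
        rwa [add_zero] at h2
      have claim1 : ∀ (i : ℕ) (hi : i < m) (s : ℕ) (hs : s < t - 1),
          x (⟨i, hi⟩, ⟨s, hs⟩)
            = if i ≤ s then ((-1 : k) ^ i) * x (⟨0, hm⟩, ⟨s - i, by omega⟩) else 0 := by
        intro i
        induction i with
        | zero =>
          intro hi s hs
          rw [if_pos (by omega), pow_zero, one_mul]
          have e : (⟨s - 0, by omega⟩ : Fin (t - 1)) = ⟨s, hs⟩ := by
            apply Fin.ext
            simp only [Fin.val_mk]
            omega
          rw [e]
        | succ i ih =>
          intro hi s hs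
          have hi' : i < m - 1 := by omega
          have hi0 : i < m := by omega
          by_cases hs1 : 1 ≤ s
          · rw [rec1 i hi' s hs1 hs, ih hi0 (s - 1) (by omega)]
            by_cases hci : i ≤ s - 1
            · rw [if_pos hci, if_pos (by omega)]
              have e : (⟨s - 1 - i, by omega⟩ : Fin (t - 1))
                  = ⟨s - (i + 1), by omega⟩ := by
                apply Fin.ext
                simp only [Fin.val_mk]
                omega
              rw [e, pow_succ]
              ring
            · rw [if_neg hci, if_neg (by omega)]
              simp
          · have hs0 : s = 0 := by omega
            subst hs0
            rw [rec2 i hi' hs, if_neg (by omega)]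
      have claim2 : ∀ (s : ℕ) (hs : s < t - 1), t - min t m ≤ s →
          x (⟨0, hm⟩, ⟨s, hs⟩) = 0 := by
        intro s hs hc
        have h2t : 2 ≤ t := by omega
        have hi : t - 1 - 1 - s < m - 1 := by omega
        have hi0 : t - 1 - 1 - s < m := by omega
        have h3 := rec3 (t - 1 - 1 - s) hi h2t
        rw [claim1 (t - 1 - 1 - s) hi0 (t - 1 - 1) (by omega)] at h3
        rw [if_pos (by omega)] at h3
        have hne : ((-1 : k) ^ (t - 1 - 1 - s)) ≠ 0 := pow_ne_zero _ (by norm_num)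
        have h4 := (mul_eq_zero.mp h3).resolve_left hne
        have e : (⟨t - 1 - 1 - (t - 1 - 1 - s), by omega⟩ : Fin (t - 1)) = ⟨s, hs⟩ := by
          apply Fin.ext
          simp only [Fin.val_mk]
          omega
        rwa [e] at h4
      refine ⟨fun s => x (⟨0, hm⟩, ⟨(s : ℕ), by have := s.2; omega⟩), ?_⟩
      funext q
      obtain ⟨iq, sq⟩ := q
      have hiq := iq.2
      have hsq := sq.2
      rw [claim1 (iq : ℕ) iq.2 (sq : ℕ) sq.2]
      by_cases hc : (iq : ℕ) ≤ (sq : ℕ) ∧ (sq : ℕ) - (iq : ℕ) < t - min t m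
      · rw [prepParam_pos t m _ (iq : ℕ) iq.2 (sq : ℕ) sq.2 hc, if_pos hc.1]
      · rw [prepParam_neg t m _ (iq : ℕ) iq.2 (sq : ℕ) sq.2 hc]
        by_cases hle : (iq : ℕ) ≤ (sq : ℕ)
        · rw [if_pos hle]
          have hge : t - min t m ≤ (sq : ℕ) - (iq : ℕ) := by omega
          rw [claim2 ((sq : ℕ) - (iq : ℕ)) (by omega) hge]
          ring
        · rw [if_neg hle]
  have hfin := nullity_eq_of_param (prepBlockMat (Prep t : KRep k) m) F hinj hrange
  rw [Module.finrank_pi, Fintype.card_fin] at hfin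
  exact hfin


lemma rank_prep (t m : ℕ) (ht : 1 ≤ t) (hm : 1 ≤ m) :
    (prepBlockMat (Prep t : KRep k) m).rank + (t - min t m) = m * (t - 1) := by
  have h := rank_add_nullity' (Prep t : KRep k) m
  rw [nullity_prep t m ht hm] at h
  rwa [show Fintype.card (Prep t : KRep k).ι1 = t - 1 from Fintype.card_fin _] at h

lemma rank_irep (t m : ℕ) (ht : 1 ≤ t) (hm : 1 ≤ m) :
    (prepBlockMat (Irep t : KRep k) m).rank + (t + (m - 1)) = m * t := by
  have h := rank_add_nullity' (Irep t : KRep k) m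
  rw [nullity_irep t m ht hm] at h
  rwa [show Fintype.card (Irep t : KRep k).ι1 = t from Fintype.card_fin _] at h

lemma rank_rreg (t m : ℕ) (lam : k) (hm : 1 ≤ m) :
    (prepBlockMat (Rreg t lam) m).rank + t = m * t := by
  have h := rank_add_nullity' (Rreg t lam) m
  rw [nullity_rreg t lam m hm] at h
  rwa [show Fintype.card (Rreg t lam).ι1 = t from Fintype.card_fin _] at h

lemma rank_rinf (t m : ℕ) (hm : 1 ≤ m) :
    (prepBlockMat (Rinf t : KRep k) m).rank + t = m * t := by
  have h := rank_add_nullity' (Rinf t : KRep k) m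
  rw [nullity_rinf t m hm] at h
  rwa [show Fintype.card (Rinf t : KRep k).ι1 = t from Fintype.card_fin _] at h

end KronAux

/-- if the Kronecker representation `M` decomposes as `⊕_j V j` with each
`V j` an indecomposable Kronecker representation, then for `n ≥ 2` the multiplicity of the
preprojective indecomposable `P_n` equals `2 p_n(M) - p_{n-1}(M) - p_{n+1}(M)`, where
`p_m(M) = rank P_m(M)`. -/
theorem kronecker_preprojective_multiplicity [IsAlgClosed k] (M : KRep k)
    (m : ℕ) (V : Fin m → KRep k) (hV : ∀ j, IsKroneckerIndec (V j))
    (hiso : KIso M (KSum V)) (n : ℕ) (hn : 2 ≤ n) :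
    ((Finset.univ.filter (fun j => KIso (V j) (Prep (k := k) n))).card : ℤ)
      = 2 * ((prepBlockMat M n).rank : ℤ)
        - ((prepBlockMat M (n - 1)).rank : ℤ)
        - ((prepBlockMat M (n + 1)).rank : ℤ) := by
  classical
  have hrk : ∀ mi : ℕ, (prepBlockMat M mi).rank = ∑ j, (prepBlockMat (V j) mi).rank := by
    intro mi
    rw [KronAux.rank_eq_of_kiso hiso mi, KronAux.rank_ksum]
  have key : ∀ j, (if KIso (V j) (Prep (k := k) n) then (1 : ℤ) else 0)
      = 2 * ((prepBlockMat (V j) n).rank : ℤ) - ((prepBlockMat (V j) (n - 1)).rank : ℤ)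
        - ((prepBlockMat (V j) (n + 1)).rank : ℤ) := by
    intro j
    rcases hV j with ⟨t, ht, hj⟩ | ⟨t, ht, hj⟩ | ⟨t, ht, lam, hj⟩ | ⟨t, ht, hj⟩
    · have e1 := KronAux.rank_eq_of_kiso hj (n - 1)
      have e2 := KronAux.rank_eq_of_kiso hj n
      have e3 := KronAux.rank_eq_of_kiso hj (n + 1)
      have r1 := KronAux.rank_prep (k := k) t (n - 1) ht (by omega)
      have r2 := KronAux.rank_prep (k := k) t n ht (by omega)
      have r3 := KronAux.rank_prep (k := k) t (n + 1) ht (by omega)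
      have hmul1 : (n - 1) * (t - 1) = n * (t - 1) - (t - 1) := by
        rw [Nat.sub_mul, one_mul]
      have hmul2 : (n + 1) * (t - 1) = n * (t - 1) + (t - 1) := by
        rw [Nat.add_mul, one_mul]
      by_cases htn : t = n
      · subst htn
        rw [if_pos hj, e1, e2, e3]
        rw [hmul1] at r1
        rw [hmul2] at r3
        have hPge : t - 1 ≤ t * (t - 1) := Nat.le_mul_of_pos_left _ (by omega)
        generalize hP : t * (t - 1) = P at r1 r2 r3 hPge
        rw [Nat.min_def] at r1 r2 r3
        split_ifs at r1 r2 r3 <;> omega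
      · have hni : ¬ KIso (V j) (Prep (k := k) n) := by
          intro hcon
          have h2 := KronAux.kiso_card2 (KronAux.kiso_trans (KronAux.kiso_symm hj) hcon)
          rw [show Fintype.card (Prep t : KRep k).ι2 = t from Fintype.card_fin _,
            show Fintype.card (Prep n : KRep k).ι2 = n from Fintype.card_fin _] at h2
          exact htn h2
        rw [if_neg hni, e1, e2, e3]
        rw [hmul1] at r1
        rw [hmul2] at r3
        have hPge : t - 1 ≤ n * (t - 1) := Nat.le_mul_of_pos_left _ (by omega)
        generalize hP : n * (t - 1) = P at r1 r2 r3 hPge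
        rw [Nat.min_def] at r1 r2 r3
        split_ifs at r1 r2 r3 <;> omega
    · have e1 := KronAux.rank_eq_of_kiso hj (n - 1)
      have e2 := KronAux.rank_eq_of_kiso hj n
      have e3 := KronAux.rank_eq_of_kiso hj (n + 1)
      have r1 := KronAux.rank_irep (k := k) t (n - 1) ht (by omega)
      have r2 := KronAux.rank_irep (k := k) t n ht (by omega)
      have r3 := KronAux.rank_irep (k := k) t (n + 1) ht (by omega)
      have hmul1 : (n - 1) * t = n * t - t := by
        rw [Nat.sub_mul, one_mul]
      have hmul2 : (n + 1) * t = n * t + t := by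
        rw [Nat.add_mul, one_mul]
      have hni : ¬ KIso (V j) (Prep (k := k) n) := by
        intro hcon
        have hcc := KronAux.kiso_trans (KronAux.kiso_symm hj) hcon
        have h1 := KronAux.kiso_card1 hcc
        have h2 := KronAux.kiso_card2 hcc
        rw [show Fintype.card (Irep t : KRep k).ι1 = t from Fintype.card_fin _,
          show Fintype.card (Prep n : KRep k).ι1 = n - 1 from Fintype.card_fin _] at h1
        rw [show Fintype.card (Irep t : KRep k).ι2 = t - 1 from Fintype.card_fin _,
          show Fintype.card (Prep n : KRep k).ι2 = n from Fintype.card_fin _] at h2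
        omega
      rw [if_neg hni, e1, e2, e3]
      rw [hmul1] at r1
      rw [hmul2] at r3
      have hPge : t ≤ n * t := Nat.le_mul_of_pos_left _ (by omega)
      generalize hP : n * t = P at r1 r2 r3 hPge
      omega
    · have e1 := KronAux.rank_eq_of_kiso hj (n - 1)
      have e2 := KronAux.rank_eq_of_kiso hj n
      have e3 := KronAux.rank_eq_of_kiso hj (n + 1)
      have r1 := KronAux.rank_rreg t (n - 1) lam (by omega)
      have r2 := KronAux.rank_rreg t n lam (by omega)
      have r3 := KronAux.rank_rreg t (n + 1) lam (by omega)
      have hmul1 : (n - 1) * t = n * t - t := by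
        rw [Nat.sub_mul, one_mul]
      have hmul2 : (n + 1) * t = n * t + t := by
        rw [Nat.add_mul, one_mul]
      have hni : ¬ KIso (V j) (Prep (k := k) n) := by
        intro hcon
        have hcc := KronAux.kiso_trans (KronAux.kiso_symm hj) hcon
        have h1 := KronAux.kiso_card1 hcc
        have h2 := KronAux.kiso_card2 hcc
        rw [show Fintype.card (Rreg t lam).ι1 = t from Fintype.card_fin _,
          show Fintype.card (Prep n : KRep k).ι1 = n - 1 from Fintype.card_fin _] at h1
        rw [show Fintype.card (Rreg t lam).ι2 = t from Fintype.card_fin _,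
          show Fintype.card (Prep n : KRep k).ι2 = n from Fintype.card_fin _] at h2
        omega
      rw [if_neg hni, e1, e2, e3]
      rw [hmul1] at r1
      rw [hmul2] at r3
      have hPge : t ≤ n * t := Nat.le_mul_of_pos_left _ (by omega)
      generalize hP : n * t = P at r1 r2 r3 hPge
      omega
    · have e1 := KronAux.rank_eq_of_kiso hj (n - 1)
      have e2 := KronAux.rank_eq_of_kiso hj n
      have e3 := KronAux.rank_eq_of_kiso hj (n + 1)
      have r1 := KronAux.rank_rinf (k := k) t (n - 1) (by omega)
      have r2 := KronAux.rank_rinf (k := k) t n (by omega)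
      have r3 := KronAux.rank_rinf (k := k) t (n + 1) (by omega)
      have hmul1 : (n - 1) * t = n * t - t := by
        rw [Nat.sub_mul, one_mul]
      have hmul2 : (n + 1) * t = n * t + t := by
        rw [Nat.add_mul, one_mul]
      have hni : ¬ KIso (V j) (Prep (k := k) n) := by
        intro hcon
        have hcc := KronAux.kiso_trans (KronAux.kiso_symm hj) hcon
        have h1 := KronAux.kiso_card1 hcc
        have h2 := KronAux.kiso_card2 hcc
        rw [show Fintype.card (Rinf t : KRep k).ι1 = t from Fintype.card_fin _,
          show Fintype.card (Prep n : KRep k).ι1 = n - 1 from Fintype.card_fin _] at h1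
        rw [show Fintype.card (Rinf t : KRep k).ι2 = t from Fintype.card_fin _,
          show Fintype.card (Prep n : KRep k).ι2 = n from Fintype.card_fin _] at h2
        omega
      rw [if_neg hni, e1, e2, e3]
      rw [hmul1] at r1
      rw [hmul2] at r3
      have hPge : t ≤ n * t := Nat.le_mul_of_pos_left _ (by omega)
      generalize hP : n * t = P at r1 r2 r3 hPge
      omega
  have hsum : ((Finset.univ.filter (fun j => KIso (V j) (Prep (k := k) n))).card : ℤ)
      = ∑ j, (if KIso (V j) (Prep (k := k) n) then (1 : ℤ) else 0) := by
    rw [Finset.card_filter, Nat.cast_sum]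
    exact Finset.sum_congr rfl fun j _ => by split <;> simp
  have c1 : ((prepBlockMat M (n - 1)).rank : ℤ)
      = ∑ j, ((prepBlockMat (V j) (n - 1)).rank : ℤ) := by
    rw [hrk (n - 1)]
    push_cast
    rfl
  have c2 : ((prepBlockMat M n).rank : ℤ)
      = ∑ j, ((prepBlockMat (V j) n).rank : ℤ) := by
    rw [hrk n]
    push_cast
    rfl
  have c3 : ((prepBlockMat M (n + 1)).rank : ℤ)
      = ∑ j, ((prepBlockMat (V j) (n + 1)).rank : ℤ) := by
    rw [hrk (n + 1)]
    push_cast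
    rfl
  rw [hsum, c1, c2, c3, Finset.mul_sum, ← Finset.sum_sub_distrib, ← Finset.sum_sub_distrib]
  exact Finset.sum_congr rfl fun j _ => key j
end

section
/- Let A be the Kronecker algebra over an algebraically closed field k, M a finite-dimensional A-module with dimension vector (d_1,d_2), and write M = P_M ⊕ R_M ⊕ I_M as the direct sums of its preprojective, regular, and preinjective parts. Then Rej_M(P_{d_2}) = R_M ⊕ I_M, where Rej_M(P_{d_2}) = ∩{Ker f : f ∈ Hom_A(M, P_{d_2})} is the reject of P_{d_2} in M. -/
variable {k : Type} [Field k]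

/-- Binary direct sum of Kronecker representations. -/
@[reducible] def KDsum (M N : KRep k) : KRep k where
  ι1 := M.ι1 ⊕ N.ι1
  ι2 := M.ι2 ⊕ N.ι2
  A := Matrix.fromBlocks M.A 0 0 N.A
  B := Matrix.fromBlocks M.B 0 0 N.B

/-- `(X, Y)` is a morphism of Kronecker representations `M → N`. -/
def KHom (M N : KRep k) (X : Matrix N.ι1 M.ι1 k) (Y : Matrix N.ι2 M.ι2 k) : Prop :=
  N.A * X = Y * M.A ∧ N.B * X = Y * M.B

/-- `P` is a direct sum of preprojective indecomposables. -/
def IsPreprojectiveSum (P : KRep k) : Prop :=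
  ∃ (m : ℕ) (nn : Fin m → ℕ), (∀ j, 1 ≤ nn j) ∧ KIso P (KSum fun j => Prep (nn j))

/-- `I` is a direct sum of preinjective indecomposables. -/
def IsPreinjectiveSum (I : KRep k) : Prop :=
  ∃ (m : ℕ) (nn : Fin m → ℕ), (∀ j, 1 ≤ nn j) ∧ KIso I (KSum fun j => Irep (nn j))

/-- `R` is a direct sum of regular indecomposables. -/
def IsRegularSum (R : KRep k) : Prop :=
  ∃ (m : ℕ) (V : Fin m → KRep k),
    (∀ j, ∃ n, 1 ≤ n ∧ ((∃ lam : k, KIso (V j) (Rreg n lam)) ∨ KIso (V j) (Rinf n))) ∧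
    KIso R (KSum V)

/-- The matrix of the canonical inclusion `k^β → k^{α ⊕ β}`. -/
def inrMat (α β : Type) [DecidableEq α] [DecidableEq β] : Matrix (α ⊕ β) β k :=
  fun a b => if a = Sum.inr b then 1 else 0

open Classical

section Helpers

variable {k : Type} [Field k]

lemma sum_if_eqL {m : ℕ} (f : Fin m → k) (a : ℕ) :
    (∑ s : Fin m, (if a = (s : ℕ) then (1:k) else 0) * f s)
      = if h : a < m then f ⟨a, h⟩ else 0 := by
  split
  · next h =>
    rw [Finset.sum_eq_single ⟨a, h⟩]
    · simp
    · intro s _ hs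
      have : ¬ a = (s : ℕ) := fun hh => hs (by exact Fin.ext hh.symm)
      simp [this]
    · simp
  · next h =>
    apply Finset.sum_eq_zero
    intro s _
    have : ¬ a = (s : ℕ) := by omega
    simp [this]

lemma sum_if_eqR {m : ℕ} (f : Fin m → k) (a : ℕ) :
    (∑ s : Fin m, f s * (if (s : ℕ) = a then (1:k) else 0))
      = if h : a < m then f ⟨a, h⟩ else 0 := by
  rw [← sum_if_eqL f a]
  congr 1; ext s
  by_cases h : a = (s : ℕ) <;> simp [h, eq_comm, mul_comm]

lemma sum_if_succL {m : ℕ} (f : Fin m → k) (a : ℕ) :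
    (∑ s : Fin m, (if a = (s : ℕ) + 1 then (1:k) else 0) * f s)
      = if h : 0 < a ∧ a - 1 < m then f ⟨a - 1, h.2⟩ else 0 := by
  split
  · next h =>
    rw [Finset.sum_eq_single ⟨a - 1, h.2⟩]
    · simp [Nat.sub_add_cancel h.1]
    · intro s _ hs
      have : ¬ a = (s : ℕ) + 1 := fun hh => hs (Fin.ext (show (s:ℕ) = a - 1 by omega))
      simp [this]
    · simp
  · next h =>
    apply Finset.sum_eq_zero
    intro s _
    have : ¬ a = (s : ℕ) + 1 := by
      have := s.isLt; omega
    simp [this]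

lemma sum_if_succR {m : ℕ} (f : Fin m → k) (a : ℕ) :
    (∑ s : Fin m, f s * (if (s : ℕ) + 1 = a then (1:k) else 0))
      = if h : 0 < a ∧ a - 1 < m then f ⟨a - 1, h.2⟩ else 0 := by
  rw [← sum_if_succL f a]
  congr 1; ext s
  by_cases h : a = (s : ℕ) + 1 <;> simp [h, eq_comm, mul_comm]

end Helpers

section Compute
variable {k : Type} [Field k]

lemma sum_mul_one_entry {n : ℕ} (f : Fin n → k) (c : Fin n) :
    (∑ s : Fin n, f s * (if s = c then (1:k) else 0)) = f c := by
  simp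

lemma sum_mul_jordan {n : ℕ} (f : Fin n → k) (lam : k) (c : Fin n) :
    (∑ s : Fin n, f s * jordanCell n lam s c)
      = lam * f c + (if h : 0 < (c:ℕ) then f ⟨(c:ℕ) - 1, by omega⟩ else 0) := by
  have hJ : ∀ s : Fin n, jordanCell n lam s c
      = lam * (if (c:ℕ) = (s:ℕ) then (1:k) else 0)
        + (if (c:ℕ) = (s:ℕ) + 1 then (1:k) else 0) := by
    intro s
    unfold jordanCell
    by_cases h1 : s = c
    · subst h1
      have : ¬ ((s:ℕ) = (s:ℕ) + 1) := by omega
      simp [this]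
    · have h1' : ¬ ((c:ℕ) = (s:ℕ)) := fun hh => h1 (Fin.ext hh.symm)
      simp [h1, h1', eq_comm]
  simp only [hJ, mul_add]
  rw [Finset.sum_add_distrib]
  congr 1
  · have : ∀ s : Fin n, f s * (lam * (if (c:ℕ) = (s:ℕ) then (1:k) else 0))
        = lam * ((if (c:ℕ) = (s:ℕ) then (1:k) else 0) * f s) := by
      intro s; ring
    rw [Finset.sum_congr rfl (fun s _ => this s), ← Finset.mul_sum,
      sum_if_eqL f (c:ℕ), dif_pos c.isLt]
  · have : ∀ s : Fin n, f s * (if (c:ℕ) = (s:ℕ) + 1 then (1:k) else 0)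
        = (if (c:ℕ) = (s:ℕ) + 1 then (1:k) else 0) * f s := by
      intro s; ring
    rw [Finset.sum_congr rfl (fun s _ => this s), sum_if_succL f (c:ℕ)]
    split
    · next h => rw [dif_pos h.1]
    · next h => rw [dif_neg (by omega)]

lemma noHom_Rreg {n N : ℕ} {lam : k} {X : Matrix (Fin (N-1)) (Fin n) k}
    {Y : Matrix (Fin N) (Fin n) k}
    (h : KHom (Rreg n lam) (Prep N) X Y) : X = 0 ∧ Y = 0 := by
  obtain ⟨hA, hB⟩ := h
  have hAe : ∀ (r : Fin N) (c : Fin n),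
      (∑ s : Fin (N-1), (if (r:ℕ) = (s:ℕ) then (1:k) else 0) * X s c)
        = ∑ s : Fin n, Y r s * (if s = c then (1:k) else 0) :=
    fun r c => congrFun (congrFun hA r) c
  have hBe : ∀ (r : Fin N) (c : Fin n),
      (∑ s : Fin (N-1), (if (r:ℕ) = (s:ℕ) + 1 then (1:k) else 0) * X s c)
        = ∑ s : Fin n, Y r s * jordanCell n lam s c :=
    fun r c => congrFun (congrFun hB r) c
  have hY : ∀ (r : ℕ) (hr : r < N) (c : Fin n),
      Y ⟨r, hr⟩ c = if h : r < N-1 then X ⟨r, h⟩ c else 0 := by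
    intro r hr c
    have h1 := hAe ⟨r, hr⟩ c
    rw [sum_if_eqL (fun s => X s c) r, sum_mul_one_entry (fun s => Y ⟨r,hr⟩ s) c] at h1
    exact h1.symm
  have hstep2 : ∀ (a : ℕ) (ha : a < N-1) (c : Fin n),
      X ⟨a, ha⟩ c = lam * (if h : a+1 < N-1 then X ⟨a+1, h⟩ c else 0)
        + (if h : 0 < (c:ℕ) ∧ a+1 < N-1 then X ⟨a+1, h.2⟩ ⟨(c:ℕ)-1, by omega⟩ else 0) := by
    intro a ha c
    have h1 := hBe ⟨a+1, by omega⟩ c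
    rw [sum_if_succL (fun s => X s c) (a+1),
      sum_mul_jordan (fun s => Y ⟨a+1, by omega⟩ s) lam c] at h1
    rw [dif_pos (show 0 < a+1 ∧ a+1-1 < N-1 from ⟨Nat.succ_pos a, by omega⟩)] at h1
    have h2 : X ⟨a, ha⟩ c = lam * Y ⟨a+1, by omega⟩ c
        + (if h : 0 < (c:ℕ) then Y ⟨a+1, by omega⟩ ⟨(c:ℕ)-1, by omega⟩ else 0) := h1
    rw [h2, hY (a+1) (by omega) c]
    congr 1
    by_cases hc : 0 < (c:ℕ)
    · rw [dif_pos hc, hY (a+1) (by omega)]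
      by_cases h2 : a+1 < N-1
      · rw [dif_pos h2, dif_pos ⟨hc, h2⟩]
      · rw [dif_neg h2, dif_neg (by tauto)]
    · rw [dif_neg hc, dif_neg (by tauto)]
  have key : ∀ (j a : ℕ) (ha : a < N-1) (c : Fin n), N-1 = a+1+j → X ⟨a, ha⟩ c = 0 := by
    intro j
    induction j with
    | zero =>
      intro a ha c hj
      rw [hstep2 a ha c, dif_neg (by omega), dif_neg (by omega)]
      simp
    | succ j ih =>
      intro a ha c hj
      have ha1 : a + 1 < N - 1 := by omega
      rw [hstep2 a ha c, dif_pos ha1, ih (a+1) ha1 c (by omega)]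
      split
      · next h => rw [ih (a+1) ha1 _ (by omega)]; simp
      · simp
  have hX : X = 0 := by
    ext r c
    have := key (N - 1 - ((r:ℕ)+1)) r r.isLt c (by omega)
    simpa using this
  refine ⟨hX, ?_⟩
  ext r c
  rw [show r = (⟨(r:ℕ), r.isLt⟩ : Fin N) from rfl, hY (r:ℕ) r.isLt c]
  split <;> simp [hX]

lemma noHom_Rinf {n N : ℕ} {X : Matrix (Fin (N-1)) (Fin n) k}
    {Y : Matrix (Fin N) (Fin n) k}
    (h : KHom (Rinf n) (Prep N) X Y) : X = 0 ∧ Y = 0 := by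
  obtain ⟨hA, hB⟩ := h
  have hAe : ∀ (r : Fin N) (c : Fin n),
      (∑ s : Fin (N-1), (if (r:ℕ) = (s:ℕ) then (1:k) else 0) * X s c)
        = ∑ s : Fin n, Y r s * jordanCell n 0 s c :=
    fun r c => congrFun (congrFun hA r) c
  have hBe : ∀ (r : Fin N) (c : Fin n),
      (∑ s : Fin (N-1), (if (r:ℕ) = (s:ℕ) + 1 then (1:k) else 0) * X s c)
        = ∑ s : Fin n, Y r s * (if s = c then (1:k) else 0) :=
    fun r c => congrFun (congrFun hB r) c
  have hY : ∀ (r : ℕ) (hr : r < N) (c : Fin n),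
      Y ⟨r, hr⟩ c = if h : 0 < r ∧ r - 1 < N-1 then X ⟨r-1, h.2⟩ c else 0 := by
    intro r hr c
    have h1 := hBe ⟨r, hr⟩ c
    rw [sum_if_succL (fun s => X s c) r, sum_mul_one_entry (fun s => Y ⟨r,hr⟩ s) c] at h1
    exact h1.symm
  have hstep2 : ∀ (a : ℕ) (ha : a < N-1) (c : Fin n),
      X ⟨a, ha⟩ c
        = if h : 0 < (c:ℕ) ∧ 0 < a ∧ a - 1 < N-1
            then X ⟨a-1, h.2.2⟩ ⟨(c:ℕ)-1, by omega⟩ else 0 := by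
    intro a ha c
    have h1 := hAe ⟨a, by omega⟩ c
    rw [sum_if_eqL (fun s => X s c) a,
      sum_mul_jordan (fun s => Y ⟨a, by omega⟩ s) 0 c, dif_pos ha] at h1
    have h2 : X ⟨a, ha⟩ c = 0 * Y ⟨a, by omega⟩ c
        + (if h : 0 < (c:ℕ) then Y ⟨a, by omega⟩ ⟨(c:ℕ)-1, by omega⟩ else 0) := h1
    rw [h2, zero_mul, zero_add]
    by_cases hc : 0 < (c:ℕ)
    · rw [dif_pos hc, hY a (by omega)]
      by_cases h2 : 0 < a ∧ a - 1 < N-1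
      · rw [dif_pos h2, dif_pos ⟨hc, h2⟩]
      · rw [dif_neg h2, dif_neg (by tauto)]
    · rw [dif_neg hc, dif_neg (by tauto)]
  have key : ∀ (a : ℕ) (ha : a < N-1) (c : Fin n), X ⟨a, ha⟩ c = 0 := by
    intro a
    induction a with
    | zero =>
      intro ha c
      rw [hstep2 0 ha c, dif_neg (by omega)]
    | succ a ih =>
      intro ha c
      rw [hstep2 (a+1) ha c]
      split
      · next h => exact ih (by omega) _
      · rfl
  have hX : X = 0 := by
    ext r c
    simpa using key r r.isLt c
  refine ⟨hX, ?_⟩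
  ext r c
  rw [show r = (⟨(r:ℕ), r.isLt⟩ : Fin N) from rfl, hY (r:ℕ) r.isLt c]
  split <;> simp [hX]

lemma noHom_Irep {n N : ℕ} {X : Matrix (Fin (N-1)) (Fin n) k}
    {Y : Matrix (Fin N) (Fin (n-1)) k}
    (h : KHom (Irep n) (Prep N) X Y) : X = 0 ∧ Y = 0 := by
  obtain ⟨hA, hB⟩ := h
  have hAe : ∀ (r : Fin N) (c : Fin n),
      (∑ s : Fin (N-1), (if (r:ℕ) = (s:ℕ) then (1:k) else 0) * X s c)
        = ∑ s : Fin (n-1), Y r s * (if (s:ℕ) = (c:ℕ) then (1:k) else 0) :=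
    fun r c => congrFun (congrFun hA r) c
  have hBe : ∀ (r : Fin N) (c : Fin n),
      (∑ s : Fin (N-1), (if (r:ℕ) = (s:ℕ) + 1 then (1:k) else 0) * X s c)
        = ∑ s : Fin (n-1), Y r s * (if (s:ℕ) + 1 = (c:ℕ) then (1:k) else 0) :=
    fun r c => congrFun (congrFun hB r) c
  have E1 : ∀ (r : ℕ) (hr : r < N) (c : Fin n),
      (if h : r < N-1 then X ⟨r, h⟩ c else 0)
        = if h : (c:ℕ) < n-1 then Y ⟨r, hr⟩ ⟨c, h⟩ else 0 := by
    intro r hr c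
    have h1 := hAe ⟨r, hr⟩ c
    rw [sum_if_eqL (fun s => X s c) r, sum_if_eqR (fun s => Y ⟨r,hr⟩ s) (c:ℕ)] at h1
    exact h1
  have E2 : ∀ (r : ℕ) (hr : r < N) (c : Fin n),
      (if h : 0 < r ∧ r - 1 < N-1 then X ⟨r-1, h.2⟩ c else 0)
        = if h : 0 < (c:ℕ) ∧ (c:ℕ) - 1 < n-1 then Y ⟨r, hr⟩ ⟨(c:ℕ)-1, h.2⟩ else 0 := by
    intro r hr c
    have h1 := hBe ⟨r, hr⟩ c
    rw [sum_if_succL (fun s => X s c) r, sum_if_succR (fun s => Y ⟨r,hr⟩ s) (c:ℕ)] at h1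
    exact h1
  have keyY : ∀ (j r : ℕ) (hr : r < N) (d : ℕ) (hd : d < n-1),
      r = j → Y ⟨r, hr⟩ ⟨d, hd⟩ = 0 := by
    intro j
    induction j with
    | zero =>
      intro r hr d hd hj
      subst hj
      have h1 := E2 0 hr ⟨d+1, by omega⟩
      rw [dif_neg (by omega), dif_pos (show 0 < d+1 ∧ d+1-1 < n-1 from ⟨by omega, by omega⟩)] at h1
      exact h1.symm
    | succ j ih =>
      intro r hr d hd hj
      subst hj
      have h1 := E2 (j+1) hr ⟨d+1, by omega⟩
      rw [dif_pos (show 0 < j+1 ∧ (j+1)-1 < N-1 from ⟨by omega, by omega⟩),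
        dif_pos (show 0 < d+1 ∧ d+1-1 < n-1 from ⟨by omega, by omega⟩)] at h1
      have hjN : j < N - 1 := by omega
      have h1' : X ⟨j, hjN⟩ ⟨d+1, by omega⟩ = Y ⟨j+1, hr⟩ ⟨d, hd⟩ := h1
      have h2 := E1 j (by omega) ⟨d+1, by omega⟩
      rw [dif_pos hjN] at h2
      rw [← h1', h2]
      split
      · next hh => exact ih j (by omega) (d+1) hh rfl
      · rfl
  have hYzero : Y = 0 := by
    ext r d
    simpa using keyY (r:ℕ) (r:ℕ) r.isLt (d:ℕ) d.isLt rfl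
  refine ⟨?_, hYzero⟩
  ext r c
  have h1 := E1 (r:ℕ) (by omega) c
  rw [dif_pos (show (r:ℕ) < N - 1 from r.isLt)] at h1
  rw [show X r c = X ⟨(r:ℕ), r.isLt⟩ c from rfl, h1]
  split <;> simp [hYzero]
end Compute

section Struct
variable {k : Type} [Field k]

lemma KHom.comp {M N L : KRep k} {X : Matrix N.ι1 M.ι1 k} {Y : Matrix N.ι2 M.ι2 k}
    {X' : Matrix L.ι1 N.ι1 k} {Y' : Matrix L.ι2 N.ι2 k}
    (h : KHom M N X Y) (h' : KHom N L X' Y') : KHom M L (X' * X) (Y' * Y) := by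
  obtain ⟨hA, hB⟩ := h
  obtain ⟨hA', hB'⟩ := h'
  constructor
  · rw [← Matrix.mul_assoc, hA', Matrix.mul_assoc, hA, ← Matrix.mul_assoc]
  · rw [← Matrix.mul_assoc, hB', Matrix.mul_assoc, hB, ← Matrix.mul_assoc]

lemma KIso.toHom {M N : KRep k} (h : KIso M N) :
    ∃ (S : Matrix N.ι1 M.ι1 k) (T : Matrix N.ι2 M.ι2 k)
      (S' : Matrix M.ι1 N.ι1 k) (T' : Matrix M.ι2 N.ι2 k),
      S * S' = 1 ∧ S' * S = 1 ∧ T * T' = 1 ∧ T' * T = 1 ∧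
      KHom M N S T ∧ KHom N M S' T' := by
  obtain ⟨S, T, S', T', h1, h2, h3, h4, h5, h6⟩ := h
  refine ⟨S, T, S', T', h1, h2, h3, h4, ⟨h5.symm, h6.symm⟩, ⟨?_, ?_⟩⟩
  · have : T' * (T * M.A) * S' = T' * (N.A * S) * S' := by rw [h5]
    rw [← Matrix.mul_assoc, ← Matrix.mul_assoc, h4, Matrix.one_mul,
      Matrix.mul_assoc, Matrix.mul_assoc, h1, Matrix.mul_one] at this
    exact this
  · have : T' * (T * M.B) * S' = T' * (N.B * S) * S' := by rw [h6]
    rw [← Matrix.mul_assoc, ← Matrix.mul_assoc, h4, Matrix.one_mul,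
      Matrix.mul_assoc, Matrix.mul_assoc, h1, Matrix.mul_one] at this
    exact this

/-- `W` admits no nonzero homomorphism to any preprojective `Prep N`. -/
def NoHomP (W : KRep k) : Prop :=
  ∀ (N : ℕ) (X : Matrix (Prep (k := k) N).ι1 W.ι1 k)
    (Y : Matrix (Prep (k := k) N).ι2 W.ι2 k),
    KHom W (Prep N) X Y → X = 0 ∧ Y = 0

lemma noHomP_of_iso {W W' : KRep k} (h : KIso W W') (h' : NoHomP W') : NoHomP W := by
  intro N X Y hh
  obtain ⟨S, T, S', T', h1, h2, h3, h4, hMN, hNM⟩ := h.toHom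
  obtain ⟨hX, hY⟩ := h' N (X * S') (Y * T') (KHom.comp hNM hh)
  constructor
  · have : X * S' * S = 0 := by rw [hX, Matrix.zero_mul]
    rwa [Matrix.mul_assoc, h2, Matrix.mul_one] at this
  · have : Y * T' * T = 0 := by rw [hY, Matrix.zero_mul]
    rwa [Matrix.mul_assoc, h4, Matrix.mul_one] at this

lemma noHomP_Rreg (n : ℕ) (lam : k) : NoHomP (Rreg n lam) :=
  fun _ _ _ h => noHom_Rreg h

lemma noHomP_Rinf (n : ℕ) : NoHomP (Rinf (k := k) n) :=
  fun _ _ _ h => noHom_Rinf h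

lemma noHomP_Irep (n : ℕ) : NoHomP (Irep (k := k) n) :=
  fun _ _ _ h => noHom_Irep h

/-- Inclusion matrix of the `j`-th summand of a sigma type. -/
noncomputable def sInclM {m : ℕ} (ι : Fin m → Type) (j : Fin m) :
    Matrix (Σ i, ι i) (ι j) k :=
  fun a b => if a = ⟨j, b⟩ then 1 else 0

lemma mul_sInclM_apply {m : ℕ} {ι : Fin m → Type} [∀ i, Fintype (ι i)] {α : Type}
    (X : Matrix α (Σ i, ι i) k) (j : Fin m) (a : α) (b : ι j) :
    (X * sInclM (k := k) ι j) a b = X a ⟨j, b⟩ := by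
  rw [Matrix.mul_apply]
  simp [sInclM]

lemma sInclM_mul_apply {m : ℕ} {ι : Fin m → Type} [∀ i, Fintype (ι i)] {α : Type}
    [Fintype α] {j : Fin m} (X : Matrix (ι j) α k) (j' : Fin m) (a : ι j') (b : α) :
    ((sInclM (k := k) ι j) * X) ⟨j', a⟩ b = if h : j' = j then X (h ▸ a) b else 0 := by
  rw [Matrix.mul_apply]
  rcases eq_or_ne j' j with h | h
  · subst h
    rw [dif_pos rfl]
    simp [sInclM]
  · rw [dif_neg h]
    apply Finset.sum_eq_zero
    intro s _
    have : (⟨j', a⟩ : Σ i, ι i) ≠ ⟨j, s⟩ := by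
      intro hh
      exact h (congrArg Sigma.fst hh)
    simp [sInclM, this]

lemma hom_sIncl {m : ℕ} (V : Fin m → KRep k) (j : Fin m) :
    KHom (V j) (KSum V) (sInclM (fun i => (V i).ι1) j) (sInclM (fun i => (V i).ι2) j) := by
  constructor
  · ext ⟨j', a⟩ b
    erw [mul_sInclM_apply, sInclM_mul_apply]
    show Matrix.blockDiagonal' (fun i => (V i).A) ⟨j', a⟩ ⟨j, b⟩ = _
    rw [Matrix.blockDiagonal'_apply]
    rcases eq_or_ne j' j with h | h
    · subst h; simp
    · simp [h]
  · ext ⟨j', a⟩ b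
    erw [mul_sInclM_apply, sInclM_mul_apply]
    show Matrix.blockDiagonal' (fun i => (V i).B) ⟨j', a⟩ ⟨j, b⟩ = _
    rw [Matrix.blockDiagonal'_apply]
    rcases eq_or_ne j' j with h | h
    · subst h; simp
    · simp [h]

lemma noHomP_sum {m : ℕ} {V : Fin m → KRep k} (h : ∀ j, NoHomP (V j)) :
    NoHomP (KSum V) := by
  intro N X Y hh
  constructor
  · funext a s
    obtain ⟨j, b⟩ := s
    have := (h j N _ _ (KHom.comp (hom_sIncl V j) hh)).1
    have h2 := congrFun (congrFun this a) b
    erw [mul_sInclM_apply] at h2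
    exact h2
  · funext a s
    obtain ⟨j, b⟩ := s
    have := (h j N _ _ (KHom.comp (hom_sIncl V j) hh)).2
    have h2 := congrFun (congrFun this a) b
    erw [mul_sInclM_apply] at h2
    exact h2

/-- Inclusion matrix of the left summand. -/
def inlM (α β : Type) [DecidableEq α] [DecidableEq β] : Matrix (α ⊕ β) α k :=
  fun a b => if a = Sum.inl b then 1 else 0

lemma mul_inlM_apply {α β γ : Type} [DecidableEq α] [DecidableEq β] [Fintype α]
    [Fintype β] (X : Matrix γ (α ⊕ β) k) (a : γ) (b : α) :
    (X * inlM (k := k) α β) a b = X a (Sum.inl b) := by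
  rw [Matrix.mul_apply]
  simp [inlM]

lemma mul_inrMat_apply {α β γ : Type} [DecidableEq α] [DecidableEq β] [Fintype α]
    [Fintype β] (X : Matrix γ (α ⊕ β) k) (a : γ) (b : β) :
    (X * inrMat (k := k) α β) a b = X a (Sum.inr b) := by
  rw [Matrix.mul_apply]
  simp [inrMat]

lemma hom_inl (P Q : KRep k) : KHom P (KDsum P Q) (inlM P.ι1 Q.ι1) (inlM P.ι2 Q.ι2) := by
  constructor <;>
  · ext x b
    rw [mul_inlM_apply]
    rcases x with a | a <;>
    · rw [Matrix.mul_apply]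
      simp [inlM, Matrix.fromBlocks]

lemma hom_inr (P Q : KRep k) : KHom Q (KDsum P Q) (inrMat P.ι1 Q.ι1) (inrMat P.ι2 Q.ι2) := by
  constructor <;>
  · ext x b
    rw [mul_inrMat_apply]
    rcases x with a | a <;>
    · rw [Matrix.mul_apply]
      simp [inrMat, Matrix.fromBlocks]

lemma noHomP_dsum {P Q : KRep k} (hP : NoHomP P) (hQ : NoHomP Q) :
    NoHomP (KDsum P Q) := by
  intro N X Y hh
  have hl1 := hP N _ _ (KHom.comp (hom_inl P Q) hh)
  have hr1 := hQ N _ _ (KHom.comp (hom_inr P Q) hh)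
  constructor
  · funext a s
    rcases s with b | b
    · have h2 := congrFun (congrFun hl1.1 a) b
      rwa [mul_inlM_apply] at h2
    · have h2 := congrFun (congrFun hr1.1 a) b
      rwa [mul_inrMat_apply] at h2
  · funext a s
    rcases s with b | b
    · have h2 := congrFun (congrFun hl1.2 a) b
      rwa [mul_inlM_apply] at h2
    · have h2 := congrFun (congrFun hr1.2 a) b
      rwa [mul_inrMat_apply] at h2

end Struct

section Emb
variable {k : Type} [Field k]

/-- Inclusion matrix `k^a → k^b` (for `a ≤ b`). -/
def embM (a b : ℕ) : Matrix (Fin b) (Fin a) k :=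
  fun i j => if (i:ℕ) = (j:ℕ) then 1 else 0

lemma hom_emb {i N : ℕ} (h : i ≤ N) :
    KHom (Prep (k := k) i) (Prep (k := k) N) (embM (i-1) (N-1)) (embM i N) := by
  constructor
  · show ((Matrix.of fun (r : Fin N) (s : Fin (N-1)) => if (r:ℕ) = (s:ℕ) then (1:k) else 0) *
        embM (i-1) (N-1) : Matrix (Fin N) (Fin (i-1)) k)
      = embM i N * (Matrix.of fun (s : Fin i) (c : Fin (i-1)) => if (s:ℕ) = (c:ℕ) then (1:k) else 0)
    ext r c
    show (∑ s : Fin (N-1), (if (r:ℕ) = (s:ℕ) then (1:k) else 0) * embM (i-1) (N-1) s c)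
      = ∑ s : Fin i, embM (k := k) i N r s * (if (s:ℕ) = (c:ℕ) then (1:k) else 0)
    rw [sum_if_eqL (fun s => embM (i-1) (N-1) s c) (r:ℕ),
      sum_if_eqR (fun s => embM (k := k) i N r s) (c:ℕ)]
    have hc := c.isLt
    have hr := r.isLt
    by_cases h1 : (r:ℕ) < N-1
    · rw [dif_pos h1, dif_pos (show (c:ℕ) < i by omega)]
      show (if (r:ℕ) = (c:ℕ) then (1:k) else 0) = (if (r:ℕ) = (c:ℕ) then (1:k) else 0)
      rfl
    · rw [dif_neg h1, dif_pos (show (c:ℕ) < i by omega)]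
      show (0:k) = if (r:ℕ) = (c:ℕ) then (1:k) else 0
      rw [if_neg (by omega)]
  · show ((Matrix.of fun (r : Fin N) (s : Fin (N-1)) => if (r:ℕ) = (s:ℕ) + 1 then (1:k) else 0) *
        embM (i-1) (N-1) : Matrix (Fin N) (Fin (i-1)) k)
      = embM i N * (Matrix.of fun (s : Fin i) (c : Fin (i-1)) => if (s:ℕ) = (c:ℕ) + 1 then (1:k) else 0)
    ext r c
    show (∑ s : Fin (N-1), (if (r:ℕ) = (s:ℕ) + 1 then (1:k) else 0) * embM (i-1) (N-1) s c)
      = ∑ s : Fin i, embM (k := k) i N r s * (if (s:ℕ) = (c:ℕ) + 1 then (1:k) else 0)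
    rw [sum_if_succL (fun s => embM (i-1) (N-1) s c) (r:ℕ),
      sum_if_eqR (fun s => embM (k := k) i N r s) ((c:ℕ)+1)]
    have hc := c.isLt
    have hr := r.isLt
    by_cases h1 : 0 < (r:ℕ) ∧ (r:ℕ) - 1 < N-1
    · rw [dif_pos h1, dif_pos (show (c:ℕ)+1 < i by omega)]
      show (if (r:ℕ)-1 = (c:ℕ) then (1:k) else 0) = (if (r:ℕ) = (c:ℕ)+1 then (1:k) else 0)
      by_cases h2 : (r:ℕ) = (c:ℕ)+1
      · rw [if_pos (by omega), if_pos h2]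
      · rw [if_neg (by omega), if_neg h2]
    · rw [dif_neg h1, dif_pos (show (c:ℕ)+1 < i by omega)]
      show (0:k) = if (r:ℕ) = (c:ℕ)+1 then (1:k) else 0
      rw [if_neg (by omega)]

lemma embM_mulVec_inj {a b : ℕ} (h : a ≤ b) (w : Fin a → k)
    (hw : (embM (k := k) a b).mulVec w = 0) : w = 0 := by
  funext c
  have h2 : (∑ s : Fin a, (if (c:ℕ) = (s:ℕ) then (1:k) else 0) * w s) = 0 :=
    congrFun hw ⟨(c:ℕ), lt_of_lt_of_le c.isLt h⟩
  rw [sum_if_eqL w (c:ℕ), dif_pos c.isLt] at h2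
  exact h2

lemma card_eq_of_inv {ι κ : Type} [Fintype ι] [Fintype κ] [DecidableEq ι] [DecidableEq κ]
    (X : Matrix ι κ k) (X' : Matrix κ ι k)
    (h1 : X * X' = 1) (h2 : X' * X = 1) : Fintype.card ι = Fintype.card κ := by
  let e : (κ → k) ≃ₗ[k] (ι → k) := LinearEquiv.ofLinear X.mulVecLin X'.mulVecLin
    (by rw [← Matrix.mulVecLin_mul, h1, Matrix.mulVecLin_one])
    (by rw [← Matrix.mulVecLin_mul, h2, Matrix.mulVecLin_one])
  have := e.finrank_eq
  simpa [Module.finrank_pi] using this.symm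

/-- Projection matrix onto the left summand. -/
def prlM (α β : Type) [DecidableEq α] [DecidableEq β] : Matrix α (α ⊕ β) k :=
  fun a x => if x = Sum.inl a then 1 else 0

lemma prlM_mul_apply {α β γ : Type} [DecidableEq α] [DecidableEq β] [Fintype α]
    [Fintype β] (X : Matrix (α ⊕ β) γ k) (a : α) (c : γ) :
    ((prlM (k := k) α β) * X) a c = X (Sum.inl a) c := by
  rw [Matrix.mul_apply]
  simp [prlM]

lemma mulVec_prlM {α β : Type} [DecidableEq α] [DecidableEq β] [Fintype α]
    [Fintype β] (v : (α ⊕ β) → k) (a : α) :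
    (prlM (k := k) α β).mulVec v a = v (Sum.inl a) := by
  simp [Matrix.mulVec, dotProduct, prlM]

lemma mulVec_inrMat {α β : Type} [DecidableEq α] [DecidableEq β] [Fintype α]
    [Fintype β] (w : β → k) (x : α ⊕ β) :
    (inrMat (k := k) α β).mulVec w x = Sum.elim (fun _ => (0:k)) w x := by
  rcases x with a | b <;> simp [Matrix.mulVec, dotProduct, inrMat]

lemma hom_prl (P Q : KRep k) :
    KHom (KDsum P Q) P (prlM P.ι1 Q.ι1) (prlM P.ι2 Q.ι2) := by
  constructor <;>
  · ext a x
    rw [prlM_mul_apply]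
    rcases x with b | b <;>
    · rw [Matrix.mul_apply]
      simp [prlM, Matrix.fromBlocks]

/-- Projection matrix onto the `j`-th summand of a sigma type. -/
noncomputable def sProjM {m : ℕ} (ι : Fin m → Type) (j : Fin m) :
    Matrix (ι j) (Σ i, ι i) k :=
  fun b a => if a = ⟨j, b⟩ then 1 else 0

lemma sProjM_mul_apply {m : ℕ} {ι : Fin m → Type} [∀ i, Fintype (ι i)] {α : Type}
    {j : Fin m} (X : Matrix (Σ i, ι i) α k) (b : ι j) (c : α) :
    ((sProjM (k := k) ι j) * X) b c = X ⟨j, b⟩ c := by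
  rw [Matrix.mul_apply]
  simp [sProjM]

lemma mulVec_sProjM {m : ℕ} {ι : Fin m → Type} [∀ i, Fintype (ι i)]
    {j : Fin m} (u : (Σ i, ι i) → k) (b : ι j) :
    (sProjM (k := k) ι j).mulVec u b = u ⟨j, b⟩ := by
  simp [Matrix.mulVec, dotProduct, sProjM]

lemma sProjM_aux {m : ℕ} {ι κ : Fin m → Type} [∀ i, Fintype (ι i)] [∀ i, Fintype (κ i)]
    (d : ∀ i, Matrix (κ i) (ι i) k) (j : Fin m) :
    d j * sProjM ι j = sProjM κ j * Matrix.blockDiagonal' d := by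
  refine Matrix.ext fun b x => ?_
  obtain ⟨j', a⟩ := x
  erw [sProjM_mul_apply, Matrix.mul_apply]
  rcases eq_or_ne j j' with rfl | hne
  · rw [Matrix.blockDiagonal'_apply_eq]
    simp [sProjM]
  · rw [Matrix.blockDiagonal'_apply_ne _ _ _ hne]
    apply Finset.sum_eq_zero
    intro s _
    have : (⟨j', a⟩ : Σ i, ι i) ≠ ⟨j, s⟩ := by
      intro hh
      exact hne (congrArg Sigma.fst hh).symm
    simp [sProjM, this]

lemma hom_sProj {m : ℕ} (V : Fin m → KRep k) (j : Fin m) :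
    KHom (KSum V) (V j) (sProjM (fun i => (V i).ι1) j) (sProjM (fun i => (V i).ι2) j) :=
  ⟨sProjM_aux (fun i => (V i).A) j, sProjM_aux (fun i => (V i).B) j⟩

end Emb

section Main
variable {k : Type} [Field k]

lemma KHom.inv {M N : KRep k} {X : Matrix N.ι1 M.ι1 k} {Y : Matrix N.ι2 M.ι2 k}
    {X' : Matrix M.ι1 N.ι1 k} {Y' : Matrix M.ι2 N.ι2 k}
    (h : KHom M N X Y) (hX : X * X' = 1) (hX' : X' * X = 1)
    (hY : Y * Y' = 1) (hY' : Y' * Y = 1) : KHom N M X' Y' := by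
  obtain ⟨hA, hB⟩ := h
  constructor
  · have : Y' * (N.A * X) * X' = Y' * (Y * M.A) * X' := by rw [hA]
    rw [← Matrix.mul_assoc, ← Matrix.mul_assoc, hY', Matrix.one_mul,
      Matrix.mul_assoc, Matrix.mul_assoc, hX, Matrix.mul_one] at this
    exact this.symm
  · have : Y' * (N.B * X) * X' = Y' * (Y * M.B) * X' := by rw [hB]
    rw [← Matrix.mul_assoc, ← Matrix.mul_assoc, hY', Matrix.one_mul,
      Matrix.mul_assoc, Matrix.mul_assoc, hX, Matrix.mul_one] at this
    exact this.symm

end Main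


/-- let `M` be a Kronecker representation with dimension vector
`(d1, d2)` and `M ≅ P_M ⊕ R_M ⊕ I_M` (via `(X1, X2)`) its decomposition into
preprojective, regular and preinjective parts.  Then the reject of `P_{d2}` in `M`,
`Rej_M(P_{d2}) = ⋂ {Ker f | f ∈ Hom(M, P_{d2})}`, equals `R_M ⊕ I_M`
(i.e. the image under the isomorphism of the regular-plus-preinjective summand),
at both vertices. -/
theorem kronecker_reject_eq [IsAlgClosed k] (M P R I : KRep k)
    (hP : IsPreprojectiveSum P) (hR : IsRegularSum R) (hI : IsPreinjectiveSum I)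
    (X1 : Matrix M.ι1 (KDsum P (KDsum R I)).ι1 k)
    (X2 : Matrix M.ι2 (KDsum P (KDsum R I)).ι2 k)
    (X1' : Matrix (KDsum P (KDsum R I)).ι1 M.ι1 k)
    (X2' : Matrix (KDsum P (KDsum R I)).ι2 M.ι2 k)
    (hX1 : X1 * X1' = 1) (hX1' : X1' * X1 = 1)
    (hX2 : X2 * X2' = 1) (hX2' : X2' * X2 = 1)
    (hmor : KHom (KDsum P (KDsum R I)) M X1 X2) :
    (⨅ f : {p : Matrix (Prep (k := k) (Fintype.card M.ι2)).ι1 M.ι1 k ×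
        Matrix (Prep (k := k) (Fintype.card M.ι2)).ι2 M.ι2 k //
        KHom M (Prep (Fintype.card M.ι2)) p.1 p.2},
      LinearMap.ker (f.1.1.mulVecLin))
        = LinearMap.range ((X1 * (inrMat P.ι1 (R.ι1 ⊕ I.ι1) :
            Matrix (KDsum P (KDsum R I)).ι1 (R.ι1 ⊕ I.ι1) k)).mulVecLin) ∧
    (⨅ f : {p : Matrix (Prep (k := k) (Fintype.card M.ι2)).ι1 M.ι1 k ×
        Matrix (Prep (k := k) (Fintype.card M.ι2)).ι2 M.ι2 k //
        KHom M (Prep (Fintype.card M.ι2)) p.1 p.2},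
      LinearMap.ker (f.1.2.mulVecLin))
        = LinearMap.range ((X2 * (inrMat P.ι2 (R.ι2 ⊕ I.ι2) :
            Matrix (KDsum P (KDsum R I)).ι2 (R.ι2 ⊕ I.ι2) k)).mulVecLin) := by

  obtain ⟨mP, nn, hnn1, hPiso⟩ := hP
  obtain ⟨S, T, S', T', hSS', hS'S, hTT', hT'T, hTA, hTB⟩ := hPiso
  have hSP : KHom P (KSum fun j => Prep (k := k) (nn j)) S T := ⟨hTA.symm, hTB.symm⟩
  have hMD : KHom M (KDsum P (KDsum R I)) X1' X2' := KHom.inv hmor hX1 hX1' hX2 hX2'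
  have hNoR : NoHomP R := by
    obtain ⟨mR, V, hV, hRiso⟩ := hR
    refine noHomP_of_iso hRiso (noHomP_sum ?_)
    intro j
    obtain ⟨n, hn, hcase⟩ := hV j
    rcases hcase with ⟨lam, hiso⟩ | hiso
    · exact noHomP_of_iso hiso (noHomP_Rreg n lam)
    · exact noHomP_of_iso hiso (noHomP_Rinf n)
  have hNoI : NoHomP I := by
    obtain ⟨mI, nnI, hnnI, hIiso⟩ := hI
    exact noHomP_of_iso hIiso (noHomP_sum (fun j => noHomP_Irep (nnI j)))
  have hNoRI : NoHomP (KDsum R I) := noHomP_dsum hNoR hNoI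
  have hle : ∀ j, nn j ≤ Fintype.card M.ι2 := by
    intro j
    have h1 : Fintype.card M.ι2 = Fintype.card (KDsum P (KDsum R I)).ι2 :=
      card_eq_of_inv X2 X2' hX2 hX2'
    have h2 : Fintype.card (KDsum P (KDsum R I)).ι2
        = Fintype.card P.ι2 + Fintype.card (KDsum R I).ι2 := Fintype.card_sum
    have h3 : Fintype.card (KSum fun j => Prep (k := k) (nn j)).ι2 = Fintype.card P.ι2 :=
      card_eq_of_inv T T' hTT' hT'T
    have h4 : Fintype.card (KSum fun j => Prep (k := k) (nn j)).ι2
        = ∑ i : Fin mP, Fintype.card (Fin (nn i)) := Fintype.card_sigma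
    have h5 : nn j ≤ ∑ i : Fin mP, Fintype.card (Fin (nn i)) := by
      have := Finset.single_le_sum
        (f := fun i => Fintype.card (Fin (nn i)))
        (fun i _ => Nat.zero_le _) (Finset.mem_univ j)
      simpa using this
    omega
  have hker : ∀ (f : {p : Matrix (Prep (k := k) (Fintype.card M.ι2)).ι1 M.ι1 k ×
      Matrix (Prep (k := k) (Fintype.card M.ι2)).ι2 M.ι2 k //
      KHom M (Prep (Fintype.card M.ι2)) p.1 p.2}),
      f.1.1 * (X1 * (inrMat P.ι1 (R.ι1 ⊕ I.ι1) :
          Matrix (KDsum P (KDsum R I)).ι1 (R.ι1 ⊕ I.ι1) k)) = 0 ∧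
      f.1.2 * (X2 * (inrMat P.ι2 (R.ι2 ⊕ I.ι2) :
          Matrix (KDsum P (KDsum R I)).ι2 (R.ι2 ⊕ I.ι2) k)) = 0 := by
    intro f
    have h1 := KHom.comp (hom_inr P (KDsum R I)) hmor
    have h2 := KHom.comp h1 f.2
    have h3 := hNoRI (Fintype.card M.ι2) _ _ h2
    exact ⟨h3.1, h3.2⟩
  constructor
  · apply le_antisymm
    · intro x hx
      rw [Submodule.mem_iInf] at hx
      have hvinl : ∀ a : P.ι1, X1'.mulVec x (Sum.inl a) = 0 := by
        have hcomp0 : ∀ j : Fin mP,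
            (sProjM (k := k) (fun i => (Prep (k := k) (nn i)).ι1) j).mulVec
              (S.mulVec ((prlM (k := k) P.ι1 (KDsum R I).ι1).mulVec (X1'.mulVec x))) = 0 := by
          intro j
          have hhom := KHom.comp (KHom.comp (KHom.comp (KHom.comp hMD (hom_prl P (KDsum R I)))
            hSP) (hom_sProj (fun i => Prep (k := k) (nn i)) j)) (hom_emb (hle j))
          have h0 := hx ⟨⟨_, _⟩, hhom⟩
          rw [LinearMap.mem_ker, Matrix.mulVecLin_apply] at h0
          have h1 : (embM (k := k) (nn j - 1) (Fintype.card M.ι2 - 1)).mulVec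
              ((sProjM (k := k) (fun i => (Prep (k := k) (nn i)).ι1) j).mulVec
                (S.mulVec ((prlM (k := k) P.ι1 (KDsum R I).ι1).mulVec (X1'.mulVec x)))) = 0 := by
            erw [← Matrix.mulVec_mulVec, ← Matrix.mulVec_mulVec, ← Matrix.mulVec_mulVec,
              ← Matrix.mulVec_mulVec] at h0
            exact h0
          exact embM_mulVec_inj (by have := hle j; omega) _ h1
        have hu : S.mulVec ((prlM (k := k) P.ι1 (KDsum R I).ι1).mulVec (X1'.mulVec x)) = 0 := by
          funext s
          obtain ⟨j, b⟩ := s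
          have := congrFun (hcomp0 j) b
          erw [mulVec_sProjM] at this
          exact this
        intro a
        have h3 := congrArg S'.mulVec hu
        rw [Matrix.mulVec_mulVec, hS'S, Matrix.one_mulVec, Matrix.mulVec_zero] at h3
        have h2 := congrFun h3 a
        rwa [mulVec_prlM] at h2
      rw [LinearMap.mem_range]
      refine ⟨fun b => X1'.mulVec x (Sum.inr b), ?_⟩
      rw [Matrix.mulVecLin_apply, ← Matrix.mulVec_mulVec]
      have heq : (inrMat (k := k) P.ι1 (R.ι1 ⊕ I.ι1)).mulVec
          (fun b => X1'.mulVec x (Sum.inr b)) = X1'.mulVec x := by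
        funext s
        rcases s with a | b
        · rw [mulVec_inrMat]
          exact (hvinl a).symm
        · rw [mulVec_inrMat]
          rfl
      rw [heq, Matrix.mulVec_mulVec, hX1, Matrix.one_mulVec]
    · intro x hx
      obtain ⟨w, rfl⟩ := LinearMap.mem_range.mp hx
      rw [Submodule.mem_iInf]
      intro f
      rw [LinearMap.mem_ker, Matrix.mulVecLin_apply, Matrix.mulVecLin_apply,
        Matrix.mulVec_mulVec, (hker f).1, Matrix.zero_mulVec]
  · apply le_antisymm
    · intro x hx
      rw [Submodule.mem_iInf] at hx
      have hvinl : ∀ a : P.ι2, X2'.mulVec x (Sum.inl a) = 0 := by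
        have hcomp0 : ∀ j : Fin mP,
            (sProjM (k := k) (fun i => (Prep (k := k) (nn i)).ι2) j).mulVec
              (T.mulVec ((prlM (k := k) P.ι2 (KDsum R I).ι2).mulVec (X2'.mulVec x))) = 0 := by
          intro j
          have hhom := KHom.comp (KHom.comp (KHom.comp (KHom.comp hMD (hom_prl P (KDsum R I)))
            hSP) (hom_sProj (fun i => Prep (k := k) (nn i)) j)) (hom_emb (hle j))
          have h0 := hx ⟨⟨_, _⟩, hhom⟩
          rw [LinearMap.mem_ker, Matrix.mulVecLin_apply] at h0
          have h1 : (embM (k := k) (nn j) (Fintype.card M.ι2)).mulVec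
              ((sProjM (k := k) (fun i => (Prep (k := k) (nn i)).ι2) j).mulVec
                (T.mulVec ((prlM (k := k) P.ι2 (KDsum R I).ι2).mulVec (X2'.mulVec x)))) = 0 := by
            erw [← Matrix.mulVec_mulVec, ← Matrix.mulVec_mulVec, ← Matrix.mulVec_mulVec,
              ← Matrix.mulVec_mulVec] at h0
            exact h0
          exact embM_mulVec_inj (hle j) _ h1
        have hu : T.mulVec ((prlM (k := k) P.ι2 (KDsum R I).ι2).mulVec (X2'.mulVec x)) = 0 := by
          funext s
          obtain ⟨j, b⟩ := s
          have := congrFun (hcomp0 j) b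
          erw [mulVec_sProjM] at this
          exact this
        intro a
        have h3 := congrArg T'.mulVec hu
        rw [Matrix.mulVec_mulVec, hT'T, Matrix.one_mulVec, Matrix.mulVec_zero] at h3
        have h2 := congrFun h3 a
        rwa [mulVec_prlM] at h2
      rw [LinearMap.mem_range]
      refine ⟨fun b => X2'.mulVec x (Sum.inr b), ?_⟩
      rw [Matrix.mulVecLin_apply, ← Matrix.mulVec_mulVec]
      have heq : (inrMat (k := k) P.ι2 (R.ι2 ⊕ I.ι2)).mulVec
          (fun b => X2'.mulVec x (Sum.inr b)) = X2'.mulVec x := by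
        funext s
        rcases s with a | b
        · rw [mulVec_inrMat]
          exact (hvinl a).symm
        · rw [mulVec_inrMat]
          rfl
      rw [heq, Matrix.mulVec_mulVec, hX2, Matrix.one_mulVec]
    · intro x hx
      obtain ⟨w, rfl⟩ := LinearMap.mem_range.mp hx
      rw [Submodule.mem_iInf]
      intro f
      rw [LinearMap.mem_ker, Matrix.mulVecLin_apply, Matrix.mulVecLin_apply,
        Matrix.mulVec_mulVec, (hker f).2, Matrix.zero_mulVec]
end
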